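/- arXiv:1908.04948 — 7 statements merged into one kernel-verified Lean document; each statement's English description precedes it below -/
import Mathlib

section
/- Let μ > 0, let a < b be real numbers, let ψ : [a,b] → ℝ be a continuously differentiable, increasing function with ψ'(t) > 0 for all t ∈ [a,b], let u, v : [a,b] → ℝ be nonnegative, bounded, integrable functions with v nondecreasing, and let g : [a,b] → ℝ be nonnegative, continuous and nondecreasing. If u(t) ≤ v(t) + g(t) ∫_a^t ψ'(s)(ψ(t)−ψ(s))^{μ−1} u(s) ds for every t ∈ [a,b], then u(t) ≤ v(t) · E_μ( g(t)Γ(μ)(ψ(t)−ψ(a))^μ ) for every t ∈ [a,b]. -/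
open Set intervalIntegral

/-- The one-parameter Mittag-Leffler function `E_μ(x) = ∑_{k=0}^∞ xᵏ / Γ(μ k + 1)`. -/
noncomputable def mittagLeffler (μ x : ℝ) : ℝ :=
  ∑' k : ℕ, x ^ k / Real.Gamma (μ * k + 1)

section Aux
open MeasureTheory Filter

lemma gamma_interp {y ν : ℝ} (hy : 1 ≤ y) (hν : 0 < ν) (hν1 : ν ≤ 1) :
    y * Real.Gamma y ≤ Real.Gamma (y + ν) * (y + ν) ^ (1 - ν) := by
  have hy0 : (0:ℝ) < y := by linarith
  have hyν : (0:ℝ) < y + ν := by linarith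
  have hΓ1 : 0 < Real.Gamma (y + ν) := Real.Gamma_pos_of_pos hyν
  have hΓ2 : 0 < Real.Gamma (y + ν + 1) := Real.Gamma_pos_of_pos (by linarith)
  have hΓy : 0 < Real.Gamma y := Real.Gamma_pos_of_pos hy0
  have h := Real.convexOn_log_Gamma.2 (mem_Ioi.2 hyν) (mem_Ioi.2 (by linarith : (0:ℝ) < y + ν + 1))
    hν.le (by linarith : (0:ℝ) ≤ 1 - ν) (by ring)
  have hpt : ν • (y + ν) + (1 - ν) • (y + ν + 1) = y + 1 := by
    simp only [smul_eq_mul]; ring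
  rw [hpt] at h
  simp only [Function.comp] at h
  have hΓadd : Real.Gamma (y + ν + 1) = (y + ν) * Real.Gamma (y + ν) :=
    Real.Gamma_add_one (ne_of_gt hyν)
  have hΓadd' : Real.Gamma (y + 1) = y * Real.Gamma y := Real.Gamma_add_one (ne_of_gt hy0)
  rw [hΓadd', hΓadd] at h
  have hlog : ν * Real.log (Real.Gamma (y + ν)) + (1 - ν) * Real.log ((y + ν) * Real.Gamma (y + ν))
      = Real.log (Real.Gamma (y + ν) * (y + ν) ^ (1 - ν)) := by
    rw [Real.log_mul (ne_of_gt hyν) (ne_of_gt hΓ1),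
      Real.log_mul (ne_of_gt hΓ1) (by positivity), Real.log_rpow hyν]
    ring
  simp only [smul_eq_mul] at h
  rw [hlog] at h
  have := Real.exp_le_exp.2 h
  rwa [Real.exp_log (by positivity), Real.exp_log (by positivity)] at this

lemma gamma_ratio {y μ : ℝ} (hy : 2 ≤ y) (hμ : 0 < μ) :
    Real.Gamma y * ((y + 1) ^ (min μ 1) / 2) ≤ Real.Gamma (y + μ) := by
  set ν := min μ 1 with hνdef
  have hν : 0 < ν := lt_min hμ one_pos
  have hν1 : ν ≤ 1 := min_le_right _ _
  have hy0 : (0:ℝ) < y := by linarith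
  have hΓy : 0 < Real.Gamma y := Real.Gamma_pos_of_pos hy0
  have h1 : Real.Gamma (y + ν) ≤ Real.Gamma (y + μ) := by
    rcases le_or_gt μ 1 with hc | hc
    · have : ν = μ := min_eq_left hc
      rw [this]
    · have : ν = 1 := min_eq_right hc.le
      rw [this]
      exact Real.Gamma_strictMonoOn_Ici.monotoneOn (by simp [mem_Ici]; linarith)
        (by simp [mem_Ici]; linarith) (by linarith)
  have h2 := gamma_interp (by linarith : (1:ℝ) ≤ y) hν hν1
  -- Γ(y+ν) * (y+ν)^(1-ν) ≥ y Γ y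
  have h3 : Real.Gamma (y + ν) * (y + ν) ^ (1 - ν) ≤ Real.Gamma (y + ν) * (y + 1) ^ (1 - ν) := by
    have hb : (y + ν) ^ (1 - ν) ≤ (y + 1) ^ (1 - ν) :=
      Real.rpow_le_rpow (by linarith) (by linarith) (by linarith)
    exact mul_le_mul_of_nonneg_left hb (Real.Gamma_pos_of_pos (by linarith)).le
  -- so y Γ y ≤ Γ(y+ν) (y+1)^(1-ν); want Γ y (y+1)^ν / 2 ≤ Γ(y+ν)
  have key : Real.Gamma y * ((y + 1) ^ ν / 2) ≤ Real.Gamma (y + ν) := by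
    have hpos : (0:ℝ) < (y + 1) ^ (1 - ν) := Real.rpow_pos_of_pos (by linarith) _
    rw [← mul_le_mul_iff_left₀ hpos]
    have hsplit : (y + 1) ^ ν * (y + 1) ^ (1 - ν) = y + 1 := by
      rw [← Real.rpow_add (by linarith)]; simp
    calc Real.Gamma y * ((y + 1) ^ ν / 2) * (y + 1) ^ (1 - ν)
        = Real.Gamma y * ((y + 1) ^ ν * (y + 1) ^ (1 - ν)) / 2 := by ring
      _ = Real.Gamma y * (y + 1) / 2 := by rw [hsplit]
      _ ≤ y * Real.Gamma y := by nlinarith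
      _ ≤ Real.Gamma (y + ν) * (y + 1) ^ (1 - ν) := le_trans h2 h3
  exact le_trans key h1

lemma ML_summable {μ : ℝ} (hμ : 0 < μ) {x : ℝ} (hx : 0 ≤ x) :
    Summable (fun k : ℕ => x ^ k / Real.Gamma (μ * k + 1)) := by
  apply summable_of_ratio_norm_eventually_le (r := 1/2) (by norm_num)
  set ν := min μ 1 with hνdef
  have hν : 0 < ν := lt_min hμ one_pos
  have hev1 : ∀ᶠ k : ℕ in atTop, (2:ℝ) ≤ μ * k + 1 := by
    have : Tendsto (fun k : ℕ => μ * k + 1) atTop atTop :=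
      tendsto_atTop_add_const_right _ _ ((tendsto_natCast_atTop_atTop).const_mul_atTop hμ)
    exact this.eventually_ge_atTop 2
  have hev2 : ∀ᶠ k : ℕ in atTop, (4 * x + 1 : ℝ) ≤ (μ * k + 2) ^ ν := by
    have h1 : Tendsto (fun k : ℕ => μ * k + 2) atTop atTop :=
      tendsto_atTop_add_const_right _ _ ((tendsto_natCast_atTop_atTop).const_mul_atTop hμ)
    exact ((tendsto_rpow_atTop hν).comp h1).eventually_ge_atTop _
  filter_upwards [hev1, hev2] with k h2y hxb
  have hΓs : 0 < Real.Gamma (μ * k + 1) := Real.Gamma_pos_of_pos (by linarith)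
  have hΓb : 0 < Real.Gamma (μ * (k + 1 : ℕ) + 1) := Real.Gamma_pos_of_pos (by positivity)
  have hxk : (0:ℝ) ≤ x ^ k := pow_nonneg hx k
  have hrg := gamma_ratio h2y hμ
  -- Γ(μk+1+μ) ≥ Γ(μk+1) * ((μk+2)^ν / 2)
  have heq : μ * ((k:ℕ)+1:ℕ) + 1 = (μ * k + 1) + μ := by push_cast; ring
  rw [Real.norm_eq_abs, Real.norm_eq_abs, abs_of_nonneg (by positivity), abs_of_nonneg (by positivity)]
  rw [heq]
  rw [div_le_iff₀ (Real.Gamma_pos_of_pos (by linarith : (0:ℝ) < μ * k + 1 + μ))]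
  have hG : Real.Gamma (μ * k + 1) * ((μ * k + 1 + 1) ^ ν / 2) ≤ Real.Gamma (μ * k + 1 + μ) := hrg
  have hxb' : (4 * x + 1 : ℝ) ≤ (μ * k + 1 + 1) ^ ν := by
    have : (μ * k + 2 : ℝ) = μ * k + 1 + 1 := by ring
    rwa [this] at hxb
  have hrp : (0:ℝ) < (μ * k + 1 + 1) ^ ν := Real.rpow_pos_of_pos (by linarith) _
  have h5 : x ^ k / Real.Gamma (μ*k+1) * (Real.Gamma (μ*k+1) * ((μ * k + 1 + 1) ^ ν / 2))
      ≤ x ^ k / Real.Gamma (μ*k+1) * Real.Gamma (μ * k + 1 + μ) :=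
    mul_le_mul_of_nonneg_left hG (by positivity)
  have h6 : x ^ k / Real.Gamma (μ*k+1) * (Real.Gamma (μ*k+1) * ((μ * k + 1 + 1) ^ ν / 2))
      = x ^ k * ((μ * k + 1 + 1) ^ ν / 2) := by
    field_simp
  rw [h6] at h5
  have hps : x ^ (k+1) = x ^ k * x := pow_succ x k
  nlinarith [h5, hxb', hxk, mul_le_mul_of_nonneg_left hxb' hxk]

lemma beta_Ioc {p q : ℝ} (hp : 0 < p) (hq : 0 < q) :
    IntegrableOn (fun x : ℝ => x ^ (q - 1) * (1 - x) ^ (p - 1)) (Ioc 0 1) ∧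
    ∫ x in Ioc (0:ℝ) 1, x ^ (q - 1) * (1 - x) ^ (p - 1)
      = Real.Gamma p * Real.Gamma q / Real.Gamma (p + q) := by
  have hcongr : EqOn (fun x : ℝ => ((x:ℂ) ^ ((q:ℂ) - 1) * (1 - (x:ℂ)) ^ ((p:ℂ) - 1)))
      (fun x : ℝ => ((x ^ (q-1) * (1-x) ^ (p-1) : ℝ) : ℂ)) (Ioc 0 1) := by
    intro x hx
    simp only
    rw [Complex.ofReal_mul, Complex.ofReal_cpow hx.1.le, Complex.ofReal_cpow (by linarith [hx.2])]
    push_cast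
    ring_nf
  have hconv := Complex.betaIntegral_convergent (u := (q:ℂ)) (v := (p:ℂ)) (by simpa using hq)
    (by simpa using hp)
  have hconv' : IntegrableOn (fun x : ℝ => ((x:ℂ) ^ ((q:ℂ) - 1) * (1 - (x:ℂ)) ^ ((p:ℂ) - 1)))
      (Ioc 0 1) := by
    rwa [intervalIntegrable_iff_integrableOn_Ioc_of_le zero_le_one] at hconv
  have hconv'' : IntegrableOn (fun x : ℝ => ((x ^ (q-1) * (1-x) ^ (p-1) : ℝ) : ℂ)) (Ioc 0 1) :=
    hconv'.congr_fun hcongr measurableSet_Ioc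
  have hint : IntegrableOn (fun x : ℝ => x ^ (q - 1) * (1 - x) ^ (p - 1)) (Ioc 0 1) := by
    have := hconv''.re
    simp at this; exact this
  refine ⟨hint, ?_⟩
  have hB := Complex.Gamma_mul_Gamma_eq_betaIntegral (s := (q:ℂ)) (t := (p:ℂ))
    (by simpa using hq) (by simpa using hp)
  have hBval : Complex.betaIntegral q p
      = ((∫ x in Ioc (0:ℝ) 1, x ^ (q - 1) * (1 - x) ^ (p - 1) : ℝ) : ℂ) := by
    rw [Complex.betaIntegral, intervalIntegral.integral_of_le zero_le_one]
    rw [setIntegral_congr_fun measurableSet_Ioc hcongr]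
    exact integral_ofReal
  rw [hBval] at hB
  have hΓ : (Real.Gamma q : ℂ) * (Real.Gamma p : ℂ)
      = (Real.Gamma (p + q) : ℂ) * ((∫ x in Ioc (0:ℝ) 1, x ^ (q - 1) * (1 - x) ^ (p - 1) : ℝ) : ℂ) := by
    rw [show ((q:ℂ) + (p:ℂ)) = ((p + q : ℝ) : ℂ) by push_cast; ring] at hB
    rw [Complex.Gamma_ofReal, Complex.Gamma_ofReal, Complex.Gamma_ofReal] at hB
    exact hB
  have := hΓ
  rw [← Complex.ofReal_mul, ← Complex.ofReal_mul] at this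
  have h2 := Complex.ofReal_inj.1 this
  have hΓpq : Real.Gamma (p + q) ≠ 0 := (Real.Gamma_pos_of_pos (by linarith)).ne'
  field_simp at h2 ⊢
  linarith [h2]

lemma beta_general {p q c d : ℝ} (hp : 0 < p) (hq : 0 < q) (hcd : c < d) :
    IntegrableOn (fun x : ℝ => (d - x) ^ (p - 1) * (x - c) ^ (q - 1)) (Ioo c d) ∧
    ∫ x in Ioo c d, (d - x) ^ (p - 1) * (x - c) ^ (q - 1)
      = Real.Gamma p * Real.Gamma q / Real.Gamma (p + q) * (d - c) ^ (p + q - 1) := by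
  have hdc : (0:ℝ) < d - c := by linarith
  set f : ℝ → ℝ := fun y => c + (d - c) * y with hf
  have hderiv : ∀ y ∈ Ioo (0:ℝ) 1, HasDerivWithinAt f (d - c) (Ioo 0 1) y := fun y _ => by
    simpa [hf] using (((hasDerivAt_id y).const_mul (d - c)).const_add c).hasDerivWithinAt
  have hinj : InjOn f (Ioo 0 1) := fun y₁ _ y₂ _ h => by
    simp only [hf] at h
    have := mul_left_cancel₀ hdc.ne' (by linarith : (d-c)*y₁ = (d-c)*y₂)
    exact this
  have himg : f '' Ioo 0 1 = Ioo c d := by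
    ext x
    constructor
    · rintro ⟨y, hy, rfl⟩
      refine ⟨?_, ?_⟩ <;> simp only [hf] <;> nlinarith [hy.1, hy.2]
    · intro hx
      exact ⟨(x - c) / (d - c), ⟨div_pos (by linarith [hx.1]) hdc,
        by rw [div_lt_one hdc]; linarith [hx.2]⟩, by simp only [hf]; field_simp; ring⟩
  set G : ℝ → ℝ := fun x => (d - x) ^ (p - 1) * (x - c) ^ (q - 1) with hG
  have hGf : EqOn (fun y => |d - c| • G (f y))
      (fun y => (d - c) ^ (p + q - 1) * (y ^ (q - 1) * (1 - y) ^ (p - 1))) (Ioo 0 1) := by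
    intro y hy
    have h1 : d - f y = (d - c) * (1 - y) := by simp only [hf]; ring
    have h2 : f y - c = (d - c) * y := by simp only [hf]; ring
    simp only [hG, smul_eq_mul, h1, h2, abs_of_pos hdc]
    rw [Real.mul_rpow hdc.le (by linarith [hy.2]), Real.mul_rpow hdc.le hy.1.le]
    rw [show p + q - 1 = 1 + (p - 1) + (q - 1) by ring, Real.rpow_add hdc, Real.rpow_add hdc,
      Real.rpow_one]
    ring
  have hint01 : IntegrableOn (fun y : ℝ => y ^ (q - 1) * (1 - y) ^ (p - 1)) (Ioo 0 1) :=
    (beta_Ioc hp hq).1.mono_set Ioo_subset_Ioc_self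
  have hmain := integral_image_eq_integral_abs_deriv_smul measurableSet_Ioo hderiv hinj G
  rw [himg] at hmain
  constructor
  · rw [← himg, integrableOn_image_iff_integrableOn_abs_deriv_smul measurableSet_Ioo hderiv hinj]
    exact (IntegrableOn.congr_fun (by exact (hint01.const_mul _)) hGf.symm measurableSet_Ioo)
  · rw [hmain, setIntegral_congr_fun measurableSet_Ioo hGf, MeasureTheory.integral_const_mul]
    have : ∫ y in Ioo (0:ℝ) 1, y ^ (q - 1) * (1 - y) ^ (p - 1)
        = Real.Gamma p * Real.Gamma q / Real.Gamma (p + q) := by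
      rw [← integral_Ioc_eq_integral_Ioo]; exact (beta_Ioc hp hq).2
    rw [this]; ring

lemma key_kernel {μ a b : ℝ} (hμ : 0 < μ) {ψ ψ' : ℝ → ℝ}
    (hψdiff : ∀ t ∈ Icc a b, HasDerivAt ψ (ψ' t) t)
    (hψ'pos : ∀ t ∈ Icc a b, 0 < ψ' t)
    (hψmono : StrictMonoOn ψ (Icc a b))
    {t : ℝ} (ht : t ∈ Icc a b) (e : ℝ) (he : 0 ≤ e) :
    IntegrableOn (fun s => ψ' s * (ψ t - ψ s) ^ (μ - 1) * (ψ s - ψ a) ^ e) (Ioo a t) ∧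
    ∫ s in Ioo a t, ψ' s * (ψ t - ψ s) ^ (μ - 1) * (ψ s - ψ a) ^ e
      = Real.Gamma μ * Real.Gamma (e + 1) / Real.Gamma (μ + (e + 1)) * (ψ t - ψ a) ^ (μ + e) := by
  have hamem : a ∈ Icc a b := ⟨le_refl a, ht.1.trans ht.2⟩
  rcases eq_or_lt_of_le ht.1 with rfl | hat
  · refine ⟨by simp [IntegrableOn], ?_⟩
    rw [Ioo_self, Measure.restrict_empty, integral_zero_measure, sub_self,
      Real.zero_rpow (by positivity), mul_zero]
  · have hsub : Ioo a t ⊆ Icc a b := fun s hs => ⟨hs.1.le, hs.2.le.trans ht.2⟩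
    have hψab : ψ a < ψ t := hψmono hamem ht hat
    set G : ℝ → ℝ := fun x => (ψ t - x) ^ (μ - 1) * (x - ψ a) ^ e with hGdef
    have hderiv : ∀ s ∈ Ioo a t, HasDerivWithinAt ψ (ψ' s) (Ioo a t) s :=
      fun s hs => (hψdiff s (hsub hs)).hasDerivWithinAt
    have hinj : InjOn ψ (Ioo a t) := hψmono.injOn.mono hsub
    have hψcont : ContinuousOn ψ (Icc a t) := fun s hs =>
      (hψdiff s ⟨hs.1, hs.2.trans ht.2⟩).continuousAt.continuousWithinAt
    have himg : ψ '' Ioo a t = Ioo (ψ a) (ψ t) := by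
      apply Subset.antisymm
      · rintro x ⟨s, hs, rfl⟩
        exact ⟨hψmono hamem (hsub hs) hs.1, hψmono (hsub hs) ht hs.2⟩
      · exact intermediate_value_Ioo ht.1 hψcont
    have hEq : EqOn (fun s => |ψ' s| • G (ψ s))
        (fun s => ψ' s * (ψ t - ψ s) ^ (μ - 1) * (ψ s - ψ a) ^ e) (Ioo a t) := by
      intro s hs
      simp only [hGdef, smul_eq_mul, abs_of_pos (hψ'pos s (hsub hs))]
      ring
    have hbeta := beta_general (q := e + 1) hμ (by linarith) hψab
    have hq1 : e + 1 - 1 = e := by ring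
    rw [hq1] at hbeta
    constructor
    · have := (integrableOn_image_iff_integrableOn_abs_deriv_smul measurableSet_Ioo hderiv hinj
        G).1 (by rw [himg]; exact hbeta.1)
      exact this.congr_fun hEq measurableSet_Ioo
    · have hmain := integral_image_eq_integral_abs_deriv_smul measurableSet_Ioo hderiv hinj G
      rw [himg] at hmain
      rw [← setIntegral_congr_fun measurableSet_Ioo hEq, ← hmain, hbeta.2]
      congr 1
      ring_nf

end Aux

open MeasureTheory Filter in
/-- Gronwall lemma for the fractional integral with respect to another function `ψ`,
with nondecreasing `v`: if
`u(t) ≤ v(t) + g(t) ∫_a^t ψ'(s) (ψ(t) - ψ(s))^(μ-1) u(s) ds` on `[a, b]`, then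
`u(t) ≤ v(t) · E_μ(g(t) Γ(μ) (ψ(t) - ψ(a))^μ)` on `[a, b]`. -/
theorem fractional_gronwall_lemma
    (μ a b : ℝ) (hμ : 0 < μ) (hab : a < b)
    (ψ ψ' : ℝ → ℝ)
    (hψdiff : ∀ t ∈ Icc a b, HasDerivAt ψ (ψ' t) t)
    (hψ'cont : ContinuousOn ψ' (Icc a b))
    (hψ'pos : ∀ t ∈ Icc a b, 0 < ψ' t)
    (hψmono : StrictMonoOn ψ (Icc a b))
    (u v g : ℝ → ℝ)
    (hu_nonneg : ∀ t ∈ Icc a b, 0 ≤ u t)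
    (hv_nonneg : ∀ t ∈ Icc a b, 0 ≤ v t)
    (hu_bdd : BddAbove (u '' Icc a b))
    (hv_bdd : BddAbove (v '' Icc a b))
    (hu_int : MeasureTheory.IntegrableOn u (Icc a b))
    (hv_int : MeasureTheory.IntegrableOn v (Icc a b))
    (hv_mono : MonotoneOn v (Icc a b))
    (hg_nonneg : ∀ t ∈ Icc a b, 0 ≤ g t)
    (hg_cont : ContinuousOn g (Icc a b))
    (hg_mono : MonotoneOn g (Icc a b))
    (hineq : ∀ t ∈ Icc a b,
      u t ≤ v t + g t * ∫ s in a..t, ψ' s * (ψ t - ψ s) ^ (μ - 1) * u s) :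
    ∀ t ∈ Icc a b,
      u t ≤ v t * mittagLeffler μ (g t * Real.Gamma μ * (ψ t - ψ a) ^ μ) := by
  have hψcont : ContinuousOn ψ (Icc a b) := fun s hs =>
    (hψdiff s hs).continuousAt.continuousWithinAt
  set Γμ := Real.Gamma μ with hΓμdef
  have hΓμpos : 0 < Γμ := Real.Gamma_pos_of_pos hμ
  set M := sSup (u '' Icc a b) with hMdef
  have hamem : a ∈ Icc a b := ⟨le_refl a, hab.le⟩
  have huM : ∀ s ∈ Icc a b, u s ≤ M := fun s hs => le_csSup hu_bdd (mem_image_of_mem u hs)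
  have hM0 : 0 ≤ M := le_trans (hu_nonneg a hamem) (huM a hamem)
  have hψnn : ∀ s ∈ Icc a b, 0 ≤ ψ s - ψ a := fun s hs =>
    sub_nonneg.2 (hψmono.monotoneOn hamem hs hs.1)
  set D : ℕ → ℝ → ℝ :=
    fun n s => (g s * Γμ) ^ n * (ψ s - ψ a) ^ (μ * n) / Real.Gamma (μ * n + 1) with hDdef
  have hΓpos : ∀ n : ℕ, 0 < Real.Gamma (μ * n + 1) := fun n =>
    Real.Gamma_pos_of_pos (by positivity)
  have hDnn : ∀ n : ℕ, ∀ s ∈ Icc a b, 0 ≤ D n s := by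
    intro n s hs
    have h1 := hg_nonneg s hs
    have h2 := hψnn s hs
    have h3 := (hΓpos n).le
    positivity
  have hD0 : ∀ s : ℝ, D 0 s = 1 := by
    intro s
    simp [hDdef, Real.Gamma_one]
  -- the key induction
  have key : ∀ n : ℕ, ∀ t ∈ Icc a b,
      u t ≤ v t * (∑ k ∈ Finset.range n, D k t) + M * D n t := by
    intro n
    induction n with
    | zero =>
      intro t ht
      rw [hD0]
      simpa using huM t ht
    | succ n ih =>
      intro t ht
      have hsubIcc : Ioo a t ⊆ Icc a b := fun s hs => ⟨hs.1.le, hs.2.le.trans ht.2⟩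
      set K : ℝ → ℝ := fun s => ψ' s * (ψ t - ψ s) ^ (μ - 1) with hKdef
      have KK : ∀ k : ℕ,
          IntegrableOn (fun s => K s * (ψ s - ψ a) ^ (μ * k)) (Ioo a t) ∧
          ∫ s in Ioo a t, K s * (ψ s - ψ a) ^ (μ * k)
            = Γμ * Real.Gamma (μ * k + 1) / Real.Gamma (μ + (μ * k + 1))
              * (ψ t - ψ a) ^ (μ + μ * k) := by
        intro k
        have := key_kernel hμ hψdiff hψ'pos hψmono ht (μ * k) (by positivity)
        exact this
      have hKnn : ∀ s ∈ Ioo a t, 0 ≤ K s := by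
        intro s hs
        have h1 := (hψ'pos s (hsubIcc hs)).le
        have h2 : (0:ℝ) ≤ (ψ t - ψ s) ^ (μ - 1) :=
          Real.rpow_nonneg (sub_nonneg.2 (hψmono.monotoneOn (hsubIcc hs) ht hs.2.le)) _
        exact mul_nonneg h1 h2
      have hK_int : IntegrableOn K (Ioo a t) := by
        refine ((KK 0).1).congr_fun ?_ measurableSet_Ioo
        intro s _
        simp
      have hu_meas : AEStronglyMeasurable u (volume.restrict (Ioo a t)) :=
        hu_int.1.mono_measure (Measure.restrict_mono hsubIcc le_rfl)
      have hKu_int : IntegrableOn (fun s => K s * u s) (Ioo a t) := by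
        refine Integrable.mono' (hK_int.const_mul M) (hK_int.1.mul hu_meas) ?_
        rw [ae_restrict_iff' measurableSet_Ioo]
        refine Eventually.of_forall fun s hs => ?_
        have h1 := hKnn s hs
        have h2 := hu_nonneg s (hsubIcc hs)
        have h3 := huM s (hsubIcc hs)
        rw [Real.norm_eq_abs, abs_of_nonneg (mul_nonneg h1 h2)]
        calc K s * u s ≤ K s * M := mul_le_mul_of_nonneg_left h3 h1
          _ = M * K s := mul_comm _ _
      set W : ℝ → ℝ := fun s =>
        v t * ∑ k ∈ Finset.range n,
            (g t * Γμ) ^ k / Real.Gamma (μ * k + 1) * (ψ s - ψ a) ^ (μ * k)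
          + M * ((g t * Γμ) ^ n / Real.Gamma (μ * n + 1) * (ψ s - ψ a) ^ (μ * n)) with hWdef
      have hF1_int : IntegrableOn (fun s => ∑ k ∈ Finset.range n,
          (g t * Γμ) ^ k / Real.Gamma (μ * k + 1) * (K s * (ψ s - ψ a) ^ (μ * k))) (Ioo a t) :=
        integrable_finset_sum _ fun k _ => ((KK k).1).const_mul _
      have hF2_int : IntegrableOn (fun s => (g t * Γμ) ^ n / Real.Gamma (μ * n + 1)
          * (K s * (ψ s - ψ a) ^ (μ * n))) (Ioo a t) := ((KK n).1).const_mul _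
      have hEqKW : EqOn (fun s => K s * W s) (fun s =>
          v t * ∑ k ∈ Finset.range n,
            (g t * Γμ) ^ k / Real.Gamma (μ * k + 1) * (K s * (ψ s - ψ a) ^ (μ * k))
          + M * ((g t * Γμ) ^ n / Real.Gamma (μ * n + 1) * (K s * (ψ s - ψ a) ^ (μ * n))))
          (Ioo a t) := by
        intro s _
        simp only [hWdef, Finset.mul_sum, mul_add]
        congr 1
        · exact Finset.sum_congr rfl fun k _ => by ring
        · ring
      have hKW_int : IntegrableOn (fun s => K s * W s) (Ioo a t) :=
        IntegrableOn.congr_fun ((hF1_int.const_mul (v t)).add (hF2_int.const_mul M))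
          hEqKW.symm measurableSet_Ioo
      have hptwise : ∀ s ∈ Ioo a t, K s * u s ≤ K s * W s := by
        intro s hs
        refine mul_le_mul_of_nonneg_left ?_ (hKnn s hs)
        have hsmem := hsubIcc hs
        have hvst : v s ≤ v t := hv_mono hsmem ht hs.2.le
        have hgst : g s ≤ g t := hg_mono hsmem ht hs.2.le
        have hterm : ∀ k : ℕ, D k s ≤
            (g t * Γμ) ^ k / Real.Gamma (μ * k + 1) * (ψ s - ψ a) ^ (μ * k) := by
          intro k
          simp only [hDdef]
          rw [div_mul_eq_mul_div]
          have hb : (g s * Γμ) ^ k ≤ (g t * Γμ) ^ k :=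
            pow_le_pow_left₀ (mul_nonneg (hg_nonneg s hsmem) hΓμpos.le)
              (mul_le_mul_of_nonneg_right hgst hΓμpos.le) k
          have hz := Real.rpow_nonneg (hψnn s hsmem) (μ * k)
          have := mul_le_mul_of_nonneg_right hb hz
          exact (div_le_div_iff_of_pos_right (hΓpos k)).2 this
        have hsum_nn : 0 ≤ ∑ k ∈ Finset.range n, D k s :=
          Finset.sum_nonneg fun k _ => hDnn k s hsmem
        have h1 : v s * (∑ k ∈ Finset.range n, D k s) ≤ v t * (∑ k ∈ Finset.range n, D k s) :=
          mul_le_mul_of_nonneg_right hvst hsum_nn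
        have h2 : v t * (∑ k ∈ Finset.range n, D k s)
            ≤ v t * ∑ k ∈ Finset.range n,
              (g t * Γμ) ^ k / Real.Gamma (μ * k + 1) * (ψ s - ψ a) ^ (μ * k) :=
          mul_le_mul_of_nonneg_left (Finset.sum_le_sum fun k _ => hterm k) (hv_nonneg t ht)
        have h3 : M * D n s ≤ M * ((g t * Γμ) ^ n / Real.Gamma (μ * n + 1)
            * (ψ s - ψ a) ^ (μ * n)) := mul_le_mul_of_nonneg_left (hterm n) hM0
        have hihs := ih s hsmem
        simp only [hWdef]
        linarith
      have hInt_mono : ∫ s in Ioo a t, K s * u s ≤ ∫ s in Ioo a t, K s * W s :=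
        setIntegral_mono_on hKu_int hKW_int measurableSet_Ioo hptwise
      have hIval : ∫ s in Ioo a t, K s * W s
          = v t * ∑ k ∈ Finset.range n, (g t * Γμ) ^ k / Real.Gamma (μ * k + 1)
              * (Γμ * Real.Gamma (μ * k + 1) / Real.Gamma (μ + (μ * k + 1))
                * (ψ t - ψ a) ^ (μ + μ * k))
            + M * ((g t * Γμ) ^ n / Real.Gamma (μ * n + 1)
              * (Γμ * Real.Gamma (μ * n + 1) / Real.Gamma (μ + (μ * n + 1))
                * (ψ t - ψ a) ^ (μ + μ * n))) := by
        rw [setIntegral_congr_fun measurableSet_Ioo hEqKW]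
        rw [integral_add (hF1_int.const_mul (v t)) (hF2_int.const_mul M)]
        rw [MeasureTheory.integral_const_mul, MeasureTheory.integral_const_mul,
          integral_finset_sum _ (fun k _ => ((KK k).1).const_mul _)]
        congr 1
        · congr 1
          exact Finset.sum_congr rfl fun k _ => by rw [MeasureTheory.integral_const_mul, (KK k).2]
        · congr 1
          rw [MeasureTheory.integral_const_mul, (KK n).2]
      have hDsucc : ∀ k : ℕ, g t * ((g t * Γμ) ^ k / Real.Gamma (μ * k + 1)
          * (Γμ * Real.Gamma (μ * k + 1) / Real.Gamma (μ + (μ * k + 1))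
            * (ψ t - ψ a) ^ (μ + μ * k)))
          = D (k + 1) t := by
        intro k
        simp only [hDdef]
        push_cast
        rw [show (μ * ((k:ℝ) + 1) + 1 : ℝ) = μ + (μ * (k:ℝ) + 1) by ring,
          show (μ * ((k:ℝ) + 1) : ℝ) = μ + μ * (k:ℝ) by ring, pow_succ]
        have e1 := (hΓpos k).ne'
        have e2 := (Real.Gamma_pos_of_pos (show (0:ℝ) < μ + (μ * (k:ℕ) + 1) by positivity)).ne'
        push_cast at e1 e2
        field_simp
      have hstep' := hineq t ht
      rw [intervalIntegral.integral_of_le ht.1, integral_Ioc_eq_integral_Ioo] at hstep'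
      have hchain : g t * ∫ s in Ioo a t, K s * u s ≤ g t * ∫ s in Ioo a t, K s * W s :=
        mul_le_mul_of_nonneg_left hInt_mono (hg_nonneg t ht)
      have halg : g t * ∫ s in Ioo a t, K s * W s
          = v t * (∑ k ∈ Finset.range n, D (k + 1) t) + M * D (n + 1) t := by
        rw [hIval, mul_add, mul_left_comm (g t) (v t), mul_left_comm (g t) M, Finset.mul_sum]
        congr 1
        · congr 1
          exact Finset.sum_congr rfl fun k _ => hDsucc k
        · congr 1
          exact hDsucc n
      have hsplit : ∑ k ∈ Finset.range (n + 1), D k t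
          = (∑ k ∈ Finset.range n, D (k + 1) t) + D 0 t := Finset.sum_range_succ' _ n
      rw [hsplit, hD0]
      have hexp : v t * ((∑ k ∈ Finset.range n, D (k + 1) t) + 1)
          = v t * (∑ k ∈ Finset.range n, D (k + 1) t) + v t := by ring
      rw [hexp]
      linarith [hstep', hchain, halg.le, halg.ge]
  -- conclusion
  intro t ht
  have hz := hψnn t ht
  have hXnn : 0 ≤ g t * Γμ * (ψ t - ψ a) ^ μ := by
    have := hg_nonneg t ht
    positivity
  have hsummable := ML_summable hμ hXnn
  have hDc : ∀ n : ℕ, D n t = (g t * Γμ * (ψ t - ψ a) ^ μ) ^ n / Real.Gamma (μ * n + 1) := by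
    intro n
    simp only [hDdef]
    congr 1
    rw [mul_pow, mul_pow, ← Real.rpow_natCast ((ψ t - ψ a) ^ μ) n, ← Real.rpow_mul hz]
    rw [mul_pow]
  have htend : Tendsto (fun m : ℕ => v t * (∑ k ∈ Finset.range m, D k t) + M * D m t) atTop
      (nhds (v t * mittagLeffler μ (g t * Γμ * (ψ t - ψ a) ^ μ) + M * 0)) := by
    refine Tendsto.add ?_ ?_
    · refine Tendsto.const_mul _ ?_
      have h := hsummable.hasSum.tendsto_sum_nat
      rw [mittagLeffler]
      refine h.congr fun m => ?_
      exact Finset.sum_congr rfl fun k _ => (hDc k).symm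
    · refine Tendsto.const_mul _ ?_
      refine hsummable.tendsto_atTop_zero.congr fun m => ?_
      exact (hDc m).symm
  rw [mul_zero, add_zero] at htend
  exact ge_of_tendsto' htend fun m => key m t ht
end

section
/- Let 0 < α ≤ 1, t₀ ≥ 0, a > 0, δ ≥ 0 and c ≥ 0, and let w : [t₀, t₀+a] → ℝ be a continuous nonnegative function. If w(t) ≤ δ + c ∫_{t₀}^t (t−s)^{α−1} w(s) ds for every t ∈ [t₀, t₀+a], then w(t) ≤ δ · E_α( cΓ(α)(t−t₀)^α ) for every t ∈ [t₀, t₀+a]. -/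
open Set intervalIntegral
open scoped Nat

lemma real_beta (u v : ℝ) (hu : 0 < u) (hv : 0 < v) :
    ∫ x in (0:ℝ)..1, x ^ (u-1) * (1-x) ^ (v-1) =
      Real.Gamma u * Real.Gamma v / Real.Gamma (u+v) := by
  have h := Complex.Gamma_mul_Gamma_eq_betaIntegral (s := (u:ℂ)) (t := (v:ℂ))
    (by simpa using hu) (by simpa using hv)
  have hB : Complex.betaIntegral u v =
      ((∫ x in (0:ℝ)..1, x ^ (u-1) * (1-x) ^ (v-1) : ℝ) : ℂ) := by
    rw [Complex.betaIntegral, ← intervalIntegral.integral_ofReal]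
    refine intervalIntegral.integral_congr fun x hx => ?_
    rw [uIcc_of_le (by norm_num)] at hx
    have e1 : ((u:ℂ) - 1) = ((u - 1 : ℝ) : ℂ) := by push_cast; ring
    have e2 : ((v:ℂ) - 1) = ((v - 1 : ℝ) : ℂ) := by push_cast; ring
    have e3 : (1 - (x:ℂ)) = ((1 - x : ℝ) : ℂ) := by push_cast; ring
    rw [e1, e2, e3, ← Complex.ofReal_cpow hx.1, ← Complex.ofReal_cpow (by linarith [hx.2]),
      ← Complex.ofReal_mul]
  rw [hB] at h
  have hne : Real.Gamma (u+v) ≠ 0 := (Real.Gamma_pos_of_pos (by linarith)).ne'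
  have := congrArg Complex.re h
  rw [← Complex.ofReal_add, Complex.Gamma_ofReal, Complex.Gamma_ofReal, Complex.Gamma_ofReal] at this
  rw [← Complex.ofReal_mul, ← Complex.ofReal_mul, Complex.ofReal_re, Complex.ofReal_re] at this
  field_simp [this]
  rw [this]; ring

lemma conv_integral (α β t₀ t : ℝ) (hα : 0 < α) (hβ : 0 < β) (h : t₀ < t) :
    ∫ s in t₀..t, (t-s) ^ (α-1) * (s-t₀) ^ (β-1) =
      Real.Gamma α * Real.Gamma β / Real.Gamma (α+β) * (t-t₀) ^ (α+β-1) := by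
  set L := t - t₀ with hLdef
  have hL : 0 < L := by simp [hLdef]; linarith
  have hsub := intervalIntegral.integral_comp_mul_add
    (a := (0:ℝ)) (b := 1) (fun s => (t-s) ^ (α-1) * (s-t₀) ^ (β-1)) hL.ne' t₀
  simp only [mul_zero, zero_add, mul_one] at hsub
  have ht : L + t₀ = t := by rw [hLdef]; ring
  rw [ht] at hsub
  have hcongr : ∫ x in (0:ℝ)..1, (t - (L*x + t₀)) ^ (α-1) * ((L*x + t₀) - t₀) ^ (β-1)
      = L ^ (α-1) * L ^ (β-1) * ∫ x in (0:ℝ)..1, x ^ (β-1) * (1-x) ^ (α-1) := by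
    rw [← intervalIntegral.integral_const_mul]
    refine intervalIntegral.integral_congr fun x hx => ?_
    rw [uIcc_of_le (by norm_num)] at hx
    have e1 : t - (L*x + t₀) = L * (1-x) := by rw [hLdef]; ring
    have e2 : L*x + t₀ - t₀ = L * x := by ring
    rw [e1, e2, Real.mul_rpow hL.le (by linarith [hx.2]), Real.mul_rpow hL.le hx.1]
    ring
  rw [hcongr, real_beta β α hβ hα] at hsub
  have hLpow : L * (L ^ (α-1) * L ^ (β-1)) = L ^ (α+β-1) := by
    rw [show α+β-1 = 1 + (α-1) + (β-1) by ring, Real.rpow_add hL, Real.rpow_add hL,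
      Real.rpow_one]
    ring
  rw [smul_eq_mul, add_comm β α] at hsub
  have hI : (∫ s in t₀..t, (t-s) ^ (α-1) * (s-t₀) ^ (β-1))
      = L * (L ^ (α-1) * L ^ (β-1) * (Real.Gamma β * Real.Gamma α / Real.Gamma (α+β))) := by
    have hG : Real.Gamma (α+β) ≠ 0 := (Real.Gamma_pos_of_pos (by linarith)).ne'
    field_simp at hsub ⊢
    linarith [hsub]
  rw [hI, ← hLpow]; ring

lemma kernel_integrable (α t₀ b t : ℝ) (hα : 0 < α) (w : ℝ → ℝ)
    (hw : ContinuousOn w (Icc t₀ b)) (ht : t ∈ Icc t₀ b) :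
    IntervalIntegrable (fun s => (t-s) ^ (α-1) * w s) MeasureTheory.volume t₀ t := by
  have hk : IntervalIntegrable (fun s => (t-s) ^ (α-1)) MeasureTheory.volume t₀ t := by
    have h1 : IntervalIntegrable (fun x : ℝ => x ^ (α-1)) MeasureTheory.volume (t - t₀) (t - t) :=
      intervalIntegrable_rpow' (by linarith)
    simpa using h1.comp_sub_left t
  refine hk.mul_continuousOn (hw.mono ?_)
  rw [uIcc_of_le ht.1]
  exact Icc_subset_Icc le_rfl ht.2

lemma ml_summable (α x : ℝ) (hα : 0 < α) (hx : 0 ≤ x) :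
    Summable (fun k : ℕ => x ^ k / Real.Gamma (α * k + 1)) := by
  set S := (2*x+1) ^ (α⁻¹) with hSdef
  have hS1 : 1 ≤ S := Real.one_le_rpow (by linarith) (by positivity)
  have hΓpos : ∀ k : ℕ, 0 < Real.Gamma (α * k + 1) := fun k =>
    Real.Gamma_pos_of_pos (by positivity)
  -- eventual facts
  have htend : Filter.Tendsto (fun k : ℕ => α * k) Filter.atTop Filter.atTop := by
    exact Filter.Tendsto.const_mul_atTop hα tendsto_natCast_atTop_atTop
  have hfact : ∀ᶠ n : ℕ in Filter.atTop, S ^ (n+1) ≤ (n ! : ℝ) := by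
    have h0 := (FloorSemiring.tendsto_pow_div_factorial_atTop (K := ℝ) S).const_mul S
    rw [mul_zero] at h0
    filter_upwards [h0.eventually_le_const (by norm_num : (0:ℝ) < 1)] with n hn
    have hfp : (0:ℝ) < n ! := by positivity
    rw [mul_div_assoc', div_le_one hfp] at hn
    calc S ^ (n+1) = S * S ^ n := by ring
    _ ≤ (n ! : ℝ) := hn
  have hfloor : Filter.Tendsto (fun k : ℕ => ⌊α * k⌋₊) Filter.atTop Filter.atTop :=
    (tendsto_nat_floor_atTop (α := ℝ)).comp htend
  have hev : ∀ᶠ k : ℕ in Filter.atTop,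
      x ^ k / Real.Gamma (α * k + 1) ≤ (1/2) ^ k := by
    filter_upwards [htend.eventually_ge_atTop 2, hfloor.eventually hfact] with k h2 hf
    set n := ⌊α * (k:ℕ)⌋₊ with hndef
    have hnk : (n : ℝ) ≤ α * k := Nat.floor_le (by positivity)
    have hkn : α * k ≤ (n : ℝ) + 1 := (Nat.lt_floor_add_one _).le
    -- Γ(αk+1) ≥ n !
    have hmono := Real.Gamma_strictMonoOn_Ici.monotoneOn
    have hΓge : (n ! : ℝ) ≤ Real.Gamma (α * k + 1) := by
      have h2n : (2:ℝ) ≤ (n:ℝ) + 1 := by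
        have : (1:ℝ) ≤ (n:ℝ) := by
          have := Nat.le_floor (α := ℝ) (n := 1) (by exact_mod_cast by linarith : ((1:ℕ):ℝ) ≤ α * k)
          exact_mod_cast this
        linarith
      have := hmono (a := ((n:ℝ)+1)) (b := α * k + 1) (by simpa using h2n)
        (by simp; linarith) (by linarith)
      rwa [Real.Gamma_nat_eq_factorial] at this
    -- n ! ≥ S^(n+1) ≥ S^(αk) = (2x+1)^k
    have hpow : ((2*x+1) : ℝ) ^ k ≤ (n ! : ℝ) := by
      have h1 : S ^ ((α * k : ℝ)) ≤ S ^ (((n+1 : ℕ) : ℝ)) := by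
        apply Real.rpow_le_rpow_of_exponent_le hS1
        push_cast; linarith
      have h2 : S ^ ((α * k : ℝ)) = (2*x+1) ^ k := by
        rw [hSdef, ← Real.rpow_natCast (2*x+1) k, ← Real.rpow_mul (by linarith)]
        congr 1
        field_simp
      rw [Real.rpow_natCast] at h1
      calc ((2*x+1) : ℝ) ^ k = S ^ ((α * k : ℝ)) := h2.symm
      _ ≤ S ^ (n+1) := h1
      _ ≤ (n ! : ℝ) := hf
    have h2x : (0:ℝ) < (2*x+1) ^ k := by positivity
    calc x ^ k / Real.Gamma (α * k + 1) ≤ x ^ k / (2*x+1) ^ k := by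
          gcongr
          exact hpow.trans hΓge
    _ = (x / (2*x+1)) ^ k := by rw [div_pow]
    _ ≤ (1/2) ^ k := by
          apply pow_le_pow_left₀ (by positivity)
          rw [div_le_div_iff₀ (by linarith) (by norm_num)]
          linarith
  -- conclude
  obtain ⟨N, hN⟩ := Filter.eventually_atTop.mp hev
  rw [← summable_nat_add_iff N]
  apply Summable.of_nonneg_of_le (fun k => by positivity)
    (fun k => hN (k+N) (by omega))
  exact (summable_geometric_of_lt_one (by norm_num) (by norm_num)).comp_injective
    (add_left_injective N)

/-- Gronwall lemma for the fractional integral with kernel `(t - s)^(α-1)`: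
if `w` is continuous and nonnegative on `J = [t₀, t₀ + a]` and
`w(t) ≤ δ + c ∫_{t₀}^t (t - s)^(α-1) w(s) ds` on `J`, then
`w(t) ≤ δ · E_α(c Γ(α) (t - t₀)^α)` on `J`. -/
theorem fractional_gronwall_const
    (α t₀ a δ c : ℝ) (hα0 : 0 < α) (hα1 : α ≤ 1) (ht₀ : 0 ≤ t₀) (ha : 0 < a)
    (hδ : 0 ≤ δ) (hc : 0 ≤ c)
    (w : ℝ → ℝ)
    (hw_cont : ContinuousOn w (Icc t₀ (t₀ + a)))
    (hw_nonneg : ∀ t ∈ Icc t₀ (t₀ + a), 0 ≤ w t)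
    (hineq : ∀ t ∈ Icc t₀ (t₀ + a),
      w t ≤ δ + c * ∫ s in t₀..t, (t - s) ^ (α - 1) * w s) :
    ∀ t ∈ Icc t₀ (t₀ + a),
      w t ≤ δ * mittagLeffler α (c * Real.Gamma α * (t - t₀) ^ α) := by
  have hΓα : 0 < Real.Gamma α := Real.Gamma_pos_of_pos hα0
  obtain ⟨C, hC⟩ := (isCompact_Icc (a := t₀) (b := t₀+a)).exists_bound_of_continuousOn hw_cont
  set M := max C 0 with hMdef
  have hM0 : 0 ≤ M := le_max_right _ _
  have hwM : ∀ t ∈ Icc t₀ (t₀+a), w t ≤ M := fun t ht =>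
    (le_abs_self _).trans ((hC t ht).trans (le_max_left _ _))
  set g : ℕ → ℝ → ℝ :=
    fun k t => (c * Real.Gamma α) ^ k * (t - t₀) ^ (α * k) / Real.Gamma (α * k + 1) with hg
  have hΓk : ∀ k : ℕ, 0 < Real.Gamma (α * k + 1) := fun k =>
    Real.Gamma_pos_of_pos (by positivity)
  have hgnn : ∀ (k : ℕ) (t : ℝ), t₀ ≤ t → 0 ≤ g k t := fun k t ht => by
    apply div_nonneg _ (hΓk k).le
    exact mul_nonneg (pow_nonneg (mul_nonneg hc hΓα.le) k) (Real.rpow_nonneg (by linarith) _)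
  have hg0 : ∀ t : ℝ, g 0 t = 1 := fun t => by
    simp [hg, Real.Gamma_one]
  have hgcont : ∀ k : ℕ, ContinuousOn (g k) (Icc t₀ (t₀+a)) := by
    intro k
    have h1 : ContinuousOn (fun s : ℝ => (s - t₀) ^ (α * (k:ℕ) : ℝ)) (Icc t₀ (t₀+a)) :=
      (continuousOn_id.sub continuousOn_const).rpow_const fun s _ => Or.inr (by positivity)
    exact (continuousOn_const.mul h1).div_const _
  have hstep : ∀ (k : ℕ) (t : ℝ), t₀ < t →
      c * ∫ s in t₀..t, (t-s) ^ (α-1) * g k s = g (k+1) t := by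
    intro k t ht
    have hβ : 0 < α * k + 1 := by positivity
    have hconv := conv_integral α (α*k+1) t₀ t hα0 hβ ht
    have hcongr : (∫ s in t₀..t, (t-s) ^ (α-1) * g k s)
        = ((c*Real.Gamma α)^k / Real.Gamma (α*k+1)) *
          ∫ s in t₀..t, (t-s) ^ (α-1) * (s-t₀) ^ ((α*k+1)-1) := by
      rw [← intervalIntegral.integral_const_mul]
      refine intervalIntegral.integral_congr fun s _ => ?_
      rw [hg]
      simp only
      rw [show α*k+1-1 = α*k by ring]
      ring
    rw [hcongr, hconv, hg]
    simp only
    have hΓ1 : Real.Gamma (α*k+1) ≠ 0 := (hΓk k).ne'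
    have hΓ2 : Real.Gamma (α*((k+1:ℕ):ℝ)+1) ≠ 0 := (hΓk (k+1)).ne'
    have e1 : α + (α*k+1) = α*((k+1:ℕ):ℝ)+1 := by push_cast; ring
    have e2 : α + (α*k+1) - 1 = α*((k+1:ℕ):ℝ) := by push_cast; ring
    rw [e2, e1]
    field_simp
    ring
  -- the main induction
  have key : ∀ n : ℕ, ∀ t ∈ Icc t₀ (t₀+a),
      w t ≤ δ * ∑ k ∈ Finset.range n, g k t + M * g n t := by
    intro n
    induction n with
    | zero =>
      intro t ht
      simpa [hg0 t] using hwM t ht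
    | succ n ih =>
      intro t ht
      rcases eq_or_lt_of_le ht.1 with h0 | h0
      · -- t = t₀
        subst h0
        have hw0 : w t₀ ≤ δ := by
          have := hineq t₀ ⟨le_rfl, by linarith⟩
          simpa using this
        have hd : δ * 1 ≤ δ * ∑ k ∈ Finset.range (n+1), g k t₀ := by
          apply mul_le_mul_of_nonneg_left _ hδ
          rw [← hg0 t₀]
          exact Finset.single_le_sum (fun k _ => hgnn k t₀ le_rfl)
            (Finset.mem_range.mpr (Nat.succ_pos n))
        have hrem : 0 ≤ M * g (n+1) t₀ := mul_nonneg hM0 (hgnn (n+1) t₀ le_rfl)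
        linarith
      · -- t₀ < t
        have hJ : Icc t₀ t ⊆ Icc t₀ (t₀+a) := Icc_subset_Icc le_rfl ht.2
        have hker : ∀ s, t₀ ≤ s → s ≤ t → (0:ℝ) ≤ (t-s) ^ (α-1) :=
          fun s _ hs => Real.rpow_nonneg (by linarith) _
        -- integrability
        have hintw : IntervalIntegrable (fun s => (t-s) ^ (α-1) * w s)
            MeasureTheory.volume t₀ t := kernel_integrable α t₀ (t₀+a) t hα0 w hw_cont ht
        have hintg : ∀ k : ℕ, IntervalIntegrable (fun s => (t-s) ^ (α-1) * g k s)
            MeasureTheory.volume t₀ t :=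
          fun k => kernel_integrable α t₀ (t₀+a) t hα0 (g k) (hgcont k) ht
        have hcontF : ContinuousOn (fun s => δ * ∑ k ∈ Finset.range n, g k s + M * g n s)
            (Icc t₀ (t₀+a)) := by
          refine ContinuousOn.add (ContinuousOn.mul continuousOn_const ?_)
            (ContinuousOn.mul continuousOn_const (hgcont n))
          exact continuousOn_finset_sum _ fun k _ => hgcont k
        have hintF : IntervalIntegrable
            (fun s => (t-s) ^ (α-1) * (δ * ∑ k ∈ Finset.range n, g k s + M * g n s))
            MeasureTheory.volume t₀ t :=
          kernel_integrable α t₀ (t₀+a) t hα0 _ hcontF ht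
        -- monotonicity of the integral
        have hmono : (∫ s in t₀..t, (t-s) ^ (α-1) * w s)
            ≤ ∫ s in t₀..t, (t-s) ^ (α-1) * (δ * ∑ k ∈ Finset.range n, g k s + M * g n s) := by
          apply intervalIntegral.integral_mono_on ht.1 hintw hintF
          intro s hs
          exact mul_le_mul_of_nonneg_left (ih s (hJ hs)) (hker s hs.1 hs.2)
        -- compute the RHS integral
        have hsplit : (∫ s in t₀..t, (t-s) ^ (α-1) * (δ * ∑ k ∈ Finset.range n, g k s + M * g n s))
            = δ * ∑ k ∈ Finset.range n, (∫ s in t₀..t, (t-s) ^ (α-1) * g k s)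
              + M * ∫ s in t₀..t, (t-s) ^ (α-1) * g n s := by
          have efun : (fun s => (t-s) ^ (α-1) * (δ * ∑ k ∈ Finset.range n, g k s + M * g n s))
              = fun s => (∑ k ∈ Finset.range n, δ * ((t-s) ^ (α-1) * g k s))
                + M * ((t-s) ^ (α-1) * g n s) := by
            funext s
            rw [mul_add, Finset.mul_sum, Finset.mul_sum]
            congr 1
            · exact Finset.sum_congr rfl fun k _ => by ring
            · ring
          have hA : IntervalIntegrable
              (fun s' => ∑ k ∈ Finset.range n, δ * ((t-s') ^ (α-1) * g k s'))
              MeasureTheory.volume t₀ t := by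
            have := IntervalIntegrable.sum (μ := MeasureTheory.volume) (a := t₀) (b := t)
              (Finset.range n) (f := fun k s' => δ * ((t-s') ^ (α-1) * g k s'))
              (fun k _ => (hintg k).const_mul δ)
            have heq : (∑ k ∈ Finset.range n, fun s' => δ * ((t-s') ^ (α-1) * g k s'))
                = fun s' => ∑ k ∈ Finset.range n, δ * ((t-s') ^ (α-1) * g k s') := by
              funext s'
              simp
            rwa [heq] at this
          rw [efun, intervalIntegral.integral_add hA ((hintg n).const_mul M),
            intervalIntegral.integral_finset_sum (fun k _ => (hintg k).const_mul δ),
            intervalIntegral.integral_const_mul, Finset.mul_sum]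
          congr 1
          apply Finset.sum_congr rfl
          intro k _
          rw [intervalIntegral.integral_const_mul]
        have h1 : w t ≤ δ + c * (δ * ∑ k ∈ Finset.range n, (∫ s in t₀..t, (t-s) ^ (α-1) * g k s)
              + M * ∫ s in t₀..t, (t-s) ^ (α-1) * g n s) := by
          have := hineq t ht
          rw [← hsplit]
          exact this.trans (by nlinarith [hmono])
        have h2 : c * (δ * ∑ k ∈ Finset.range n, (∫ s in t₀..t, (t-s) ^ (α-1) * g k s)
              + M * ∫ s in t₀..t, (t-s) ^ (α-1) * g n s)
            = δ * ∑ k ∈ Finset.range n, g (k+1) t + M * g (n+1) t := by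
          have hs : ∑ k ∈ Finset.range n, g (k+1) t
              = c * ∑ k ∈ Finset.range n, ∫ s in t₀..t, (t-s) ^ (α-1) * g k s := by
            rw [Finset.mul_sum]
            exact Finset.sum_congr rfl fun k _ => (hstep k t h0).symm
          rw [hs, ← hstep n t h0]
          ring
        rw [h2] at h1
        have h3 : δ + δ * ∑ k ∈ Finset.range n, g (k+1) t
            = δ * ∑ k ∈ Finset.range (n+1), g k t := by
          rw [Finset.sum_range_succ', hg0 t, mul_add, mul_one]
          ring
        linarith
  -- pass to the limit
  intro t ht
  set x := c * Real.Gamma α * (t - t₀) ^ α with hxdef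
  have htt : 0 ≤ t - t₀ := by linarith [ht.1]
  have hx0 : 0 ≤ x := mul_nonneg (mul_nonneg hc hΓα.le) (Real.rpow_nonneg htt α)
  have hgx : ∀ k : ℕ, g k t = x ^ k / Real.Gamma (α * k + 1) := by
    intro k
    have hxk : x ^ k = (c * Real.Gamma α) ^ k * (t - t₀) ^ (α * (k:ℕ)) := by
      rw [hxdef, mul_pow, ← Real.rpow_natCast ((t-t₀) ^ α) k, ← Real.rpow_mul htt]
    rw [hg]
    simp only
    rw [hxk]
  have hsum := ml_summable α x hα0 hx0
  have hml : mittagLeffler α x = ∑' k : ℕ, x ^ k / Real.Gamma (α * k + 1) := rfl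
  have hts := ((hsum.hasSum.tendsto_sum_nat).const_mul δ).add
    ((hsum.tendsto_atTop_zero).const_mul M)
  rw [mul_zero, add_zero] at hts
  rw [hml]
  refine ge_of_tendsto' hts fun n => ?_
  simpa only [hgx] using key n t ht
end

section
/- With the data of the nonlocal fractional evolution setup, the operator F maps C(J,Ω) into itself, and for all continuous ω, ω̃ : J → Ω one has sup_{t∈J} ‖(Fω)(t) − (Fω̃)(t)‖ ≤ (r+1)·L·M·a·(1 + M‖B‖·C̃·Σ_{k=1}^p |C_k|) · sup_{t∈J} ‖ω(t) − ω̃(t)‖, where C̃ = a^{1−γ}/Γ(2−γ); that is, F is Lipschitz on (C(J,Ω), sup norm) with constant q̃ := (r+1)LMa(1 + M‖B‖C̃ Σ_{k=1}^p |C_k|). -/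
open Set intervalIntegral

section AuxLemmas

open MeasureTheory

lemma aux_smul_ii {E : Type*} [NormedAddCommGroup E] [NormedSpace ℝ E]
    {f : ℝ → ℝ} {g : ℝ → E} {x y : ℝ} (hf : IntervalIntegrable f volume x y)
    (hg : ContinuousOn g (Set.uIcc x y)) :
    IntervalIntegrable (fun s => f s • g s) volume x y := by
  have hgm : AEStronglyMeasurable g (volume.restrict (Set.uIoc x y)) :=
    (hg.mono Set.uIoc_subset_uIcc).aestronglyMeasurable measurableSet_uIoc
  rw [intervalIntegrable_iff] at hf ⊢
  rw [IntegrableOn, ← integrable_norm_iff (f := fun s => f s • g s) (hf.1.smul hgm)]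
  simp_rw [norm_smul]
  exact IntegrableOn.mul_continuousOn_of_subset hf.norm (continuous_norm.comp_continuousOn hg)
    measurableSet_uIoc isCompact_uIcc Set.uIoc_subset_uIcc

lemma aux_clm_joint {Ω : Type*} [NormedAddCommGroup Ω] [NormedSpace ℝ Ω]
    (T : ℝ → Ω →L[ℝ] Ω) (M : ℝ) (hc : ∀ x, Continuous fun t => T t x)
    (hb : ∀ t, ‖T t‖ ≤ M) : Continuous fun q : ℝ × Ω => T q.1 q.2 := by
  rw [continuous_iff_continuousAt]
  rintro ⟨t, x⟩
  have h1 : Filter.Tendsto (fun q : ℝ × Ω => T q.1 (q.2 - x)) (nhds (t, x)) (nhds 0) := by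
    have hbd : ∀ q : ℝ × Ω, ‖T q.1 (q.2 - x)‖ ≤ M * ‖q.2 - x‖ := fun q =>
      ((T q.1).le_opNorm _).trans (mul_le_mul_of_nonneg_right (hb _) (norm_nonneg _))
    have h0 : Filter.Tendsto (fun q : ℝ × Ω => M * ‖q.2 - x‖) (nhds (t, x))
        (nhds (M * ‖x - x‖)) :=
      (continuous_const.mul ((continuous_snd.sub continuous_const).norm)).tendsto _
    simp only [sub_self, norm_zero, mul_zero] at h0
    exact squeeze_zero_norm hbd h0
  have h2 : Filter.Tendsto (fun q : ℝ × Ω => T q.1 x) (nhds (t, x)) (nhds (T t x)) :=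
    ((hc x).comp continuous_fst).tendsto _
  have h3 := h1.add h2
  rw [zero_add] at h3
  have heq : (fun q : ℝ × Ω => T q.1 (q.2 - x) + T q.1 x) = fun q : ℝ × Ω => T q.1 q.2 := by
    funext q; rw [map_sub, sub_add_cancel]
  rw [heq] at h3
  exact h3

end AuxLemmas

/-- The Riemann–Liouville fractional integral
`(I_{t₀⁺}^δ g)(t) = (1/Γ(δ)) ∫_{t₀}^t (t-s)^(δ-1) g(s) ds` (Bochner integral). -/
noncomputable def fracInt {Ω : Type*} [NormedAddCommGroup Ω] [NormedSpace ℝ Ω]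
    (δ t₀ : ℝ) (g : ℝ → Ω) (t : ℝ) : Ω :=
  (1 / Real.Gamma δ) • ∫ s in t₀..t, ((t - s) ^ (δ - 1)) • g s

/-- The tuple `(ω(s), ω(b₁(s)), …, ω(b_r(s)))` fed into the nonlinearity `f`. -/
noncomputable def fArgs {Ω : Type*} {r : ℕ} (b : Fin r → ℝ → ℝ) (ω : ℝ → Ω) (s : ℝ) :
    Fin (r + 1) → Ω :=
  Fin.cons (ω s) fun i => ω (b i s)

/-- `h_ω(τ) = ∫_{t₀}^τ K(τ - s) f(s, ω(s), ω(b₁(s)), …, ω(b_r(s))) ds`. -/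
noncomputable def convMap {Ω : Type*} [NormedAddCommGroup Ω] [NormedSpace ℝ Ω] {r : ℕ}
    (K : ℝ → Ω →L[ℝ] Ω) (t₀ : ℝ) (f : ℝ → (Fin (r + 1) → Ω) → Ω)
    (b : Fin r → ℝ → ℝ) (ω : ℝ → Ω) (τ : ℝ) : Ω :=
  ∫ s in t₀..τ, (K (τ - s)) (f s (fArgs b ω s))

/-- The solution operator
`(Fω)(t) = S(t-t₀) B u₀ + ∫_{t₀}^t K(t-s) f(s, ω(s), ω(b₁(s)), …, ω(b_r(s))) ds
  - S(t-t₀) B ∑_{k=1}^p C_k (I_{t₀⁺}^{1-γ} h_ω)(t_k)`. -/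
noncomputable def Fop {Ω : Type*} [NormedAddCommGroup Ω] [NormedSpace ℝ Ω] {r p : ℕ}
    (S K : ℝ → Ω →L[ℝ] Ω) (t₀ γ : ℝ) (B : Ω →L[ℝ] Ω) (u₀ : Ω)
    (tk : Fin p → ℝ) (Ck : Fin p → ℝ) (f : ℝ → (Fin (r + 1) → Ω) → Ω)
    (b : Fin r → ℝ → ℝ) (ω : ℝ → Ω) (t : ℝ) : Ω :=
  S (t - t₀) (B u₀) + convMap K t₀ f b ω t
    - S (t - t₀) (B (∑ k, Ck k • fracInt (1 - γ) t₀ (convMap K t₀ f b ω) (tk k)))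

section MoreAux

open MeasureTheory

lemma pack_lemma {Ω : Type*} [NormedAddCommGroup Ω] [NormedSpace ℝ Ω]
    [CompleteSpace Ω] {r : ℕ}
    (t₀ a : ℝ) (ha : 0 < a)
    (K : ℝ → Ω →L[ℝ] Ω)
    (hKcont : ∀ x : Ω, ContinuousOn (fun t => K t x) (Icc 0 a))
    (hKbd : ∃ M, ∀ t ∈ Icc (0 : ℝ) a, ‖K t‖ ≤ M)
    (b : Fin r → ℝ → ℝ)
    (hbcont : ∀ i, ContinuousOn (b i) (Icc t₀ (t₀ + a)))
    (hbmaps : ∀ i, MapsTo (b i) (Icc t₀ (t₀ + a)) (Icc t₀ (t₀ + a)))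
    (f : ℝ → (Fin (r + 1) → Ω) → Ω)
    (hfcont : Continuous fun q : ℝ × (Fin (r + 1) → Ω) => f q.1 q.2)
    (ω : ℝ → Ω) (hω : ContinuousOn ω (Icc t₀ (t₀ + a))) :
    ContinuousOn (convMap K t₀ f b ω) (Icc t₀ (t₀ + a)) ∧
    ∀ τ ∈ Icc t₀ (t₀ + a),
      IntervalIntegrable (fun s => K (τ - s) (f s (fArgs b ω s))) volume t₀ τ := by
  obtain ⟨M, hKbd⟩ := hKbd
  have htJ : t₀ ≤ t₀ + a := by linarith
  set K' : ℝ → Ω →L[ℝ] Ω := fun u => K (projIcc 0 a ha.le u) with hK'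
  have hK'c : ∀ x, Continuous fun u => K' u x := fun x =>
    ((hKcont x).restrict).comp continuous_projIcc
  have hK'b : ∀ u, ‖K' u‖ ≤ M := fun u => hKbd _ (projIcc 0 a ha.le u).2
  have hKJoint : Continuous fun q : ℝ × Ω => K' q.1 q.2 := aux_clm_joint K' M hK'c hK'b
  set pr : ℝ → ℝ := fun u => (projIcc t₀ (t₀ + a) htJ u : ℝ) with hpr
  have hprc : Continuous pr := continuous_subtype_val.comp continuous_projIcc
  have hpr_eq : ∀ u ∈ Icc t₀ (t₀ + a), pr u = u := fun u hu => by
    simp [hpr, projIcc_of_mem htJ hu]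
  set ω' : ℝ → Ω := fun u => ω (pr u) with hω'
  have hω'c : Continuous ω' := (hω.restrict).comp continuous_projIcc
  set b' : Fin r → ℝ → ℝ := fun i u => b i (pr u) with hb'
  have hb'c : ∀ i, Continuous (b' i) := fun i => ((hbcont i).restrict).comp continuous_projIcc
  set G : ℝ → Ω := fun s => f s (fArgs b' ω' s) with hG
  have hargs : Continuous fun s => fArgs b' ω' s := by
    apply continuous_pi
    intro i
    refine Fin.cases ?_ (fun j => ?_) i
    · simpa only [fArgs, Fin.cons_zero] using hω'c
    · simp only [fArgs, Fin.cons_succ]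
      exact hω'c.comp (hb'c j)
  have hGc : Continuous G := hfcont.comp (continuous_id.prodMk hargs)
  have hGeq : ∀ s ∈ Icc t₀ (t₀ + a), G s = f s (fArgs b ω s) := by
    intro s hs
    have h1 : pr s = s := hpr_eq s hs
    simp only [hG]
    congr 1
    funext i
    refine Fin.cases ?_ (fun j => ?_) i
    · simp only [fArgs, Fin.cons_zero, hω', h1]
    · simp only [fArgs, Fin.cons_succ, hω', hb', h1, hpr_eq _ (hbmaps j hs)]
  have hptwise : ∀ t ∈ Icc t₀ (t₀ + a), ∀ s ∈ uIcc t₀ t,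
      K (t - s) (f s (fArgs b ω s)) = K' (t - s) (G s) := by
    intro t ht s hs
    rw [uIcc_of_le ht.1] at hs
    have hsJ : s ∈ Icc t₀ (t₀ + a) := ⟨hs.1, le_trans hs.2 ht.2⟩
    have hmem : t - s ∈ Icc (0 : ℝ) a := ⟨by linarith [hs.2], by linarith [hs.1, ht.2]⟩
    rw [hGeq s hsJ, hK']
    simp [projIcc_of_mem ha.le hmem]
  have contG2 : Continuous fun q : ℝ × ℝ => K' (q.1 - q.2) (G q.2) :=
    hKJoint.comp ((continuous_fst.sub continuous_snd).prodMk (hGc.comp continuous_snd))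
  constructor
  · have hC : Continuous fun t => ∫ s in t₀..t, K' (t - s) (G s) :=
      intervalIntegral.continuous_parametric_intervalIntegral_of_continuous
        (f := fun t s => K' (t - s) (G s)) (μ := volume) contG2 continuous_id
    apply hC.continuousOn.congr
    intro t ht
    exact intervalIntegral.integral_congr (fun s hs => hptwise t ht s hs)
  · intro τ hτ
    apply ContinuousOn.intervalIntegrable
    apply ((contG2.comp ((continuous_const (y := τ)).prodMk continuous_id)).continuousOn).congr
    intro s hs
    exact hptwise τ hτ s hs

lemma frac_bound_lemma {Ω : Type*} [NormedAddCommGroup Ω] [NormedSpace ℝ Ω] [CompleteSpace Ω]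
    (t₀ a γ C1 : ℝ) (ha : 0 < a) (hγ1 : γ < 1) (hC1 : 0 ≤ C1)
    (hω hωp : ℝ → Ω)
    (hωc : ContinuousOn hω (Icc t₀ (t₀ + a))) (hωpc : ContinuousOn hωp (Icc t₀ (t₀ + a)))
    (hdiff : ∀ τ ∈ Icc t₀ (t₀ + a), ‖hω τ - hωp τ‖ ≤ C1)
    (c : ℝ) (hc : c ∈ Icc t₀ (t₀ + a)) :
    ‖fracInt (1 - γ) t₀ hω c - fracInt (1 - γ) t₀ hωp c‖
      ≤ (1 / Real.Gamma (1 - γ)) * ((a ^ (1 - γ) / (1 - γ)) * C1) := by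
  have hγ1' : (0:ℝ) < 1 - γ := by linarith
  have hΓpos : 0 < Real.Gamma (1 - γ) := Real.Gamma_pos_of_pos hγ1'
  have hrpow : IntervalIntegrable (fun s => (c - s) ^ ((1 - γ) - 1)) volume t₀ c := by
    have h1 : IntervalIntegrable (fun x : ℝ => x ^ ((1 - γ) - 1)) volume (c - t₀) (c - c) :=
      intervalIntegral.intervalIntegrable_rpow' (by linarith)
    simpa using h1.comp_sub_left c
  have hsub : Set.uIcc t₀ c ⊆ Icc t₀ (t₀ + a) := by
    rw [uIcc_of_le hc.1]; exact Icc_subset_Icc le_rfl hc.2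
  have hIω : IntervalIntegrable (fun s => ((c - s) ^ ((1 - γ) - 1)) • hω s) volume t₀ c :=
    aux_smul_ii hrpow (hωc.mono hsub)
  have hIωp : IntervalIntegrable (fun s => ((c - s) ^ ((1 - γ) - 1)) • hωp s) volume t₀ c :=
    aux_smul_ii hrpow (hωpc.mono hsub)
  unfold fracInt
  rw [← smul_sub, ← intervalIntegral.integral_sub hIω hIωp]
  simp_rw [← smul_sub]
  rw [norm_smul]
  have hnormint : ‖∫ s in t₀..c, ((c - s) ^ ((1 - γ) - 1)) • (hω s - hωp s)‖
      ≤ |∫ s in t₀..c, ((c - s) ^ ((1 - γ) - 1)) * C1| := by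
    apply intervalIntegral.norm_integral_le_abs_of_norm_le
    · refine (MeasureTheory.ae_restrict_mem measurableSet_uIoc).mono (fun s hs => ?_)
      rw [Set.uIoc_of_le hc.1] at hs
      have hpow0 : 0 ≤ (c - s) ^ ((1 - γ) - 1) := Real.rpow_nonneg (by linarith [hs.2]) _
      rw [norm_smul, Real.norm_eq_abs, abs_of_nonneg hpow0]
      exact mul_le_mul_of_nonneg_left (hdiff s ⟨hs.1.le, hs.2.trans hc.2⟩) hpow0
    · exact hrpow.mul_const C1
  have hval : (∫ s in t₀..c, ((c - s) ^ ((1 - γ) - 1)) * C1)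
      = ((c - t₀) ^ (1 - γ) / (1 - γ)) * C1 := by
    rw [intervalIntegral.integral_mul_const]
    congr 1
    have h2 := intervalIntegral.integral_comp_sub_left (a := t₀) (b := c)
      (fun x : ℝ => x ^ ((1 - γ) - 1)) c
    rw [h2]
    simp only [sub_self, sub_sub_cancel]
    rw [integral_rpow (Or.inl (by linarith : (-1:ℝ) < (1 - γ) - 1))]
    rw [show (1 - γ) - 1 + 1 = 1 - γ by ring, Real.zero_rpow (ne_of_gt hγ1')]
    ring
  have hvnonneg : 0 ≤ ((c - t₀) ^ (1 - γ) / (1 - γ)) * C1 := by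
    apply mul_nonneg _ hC1
    apply div_nonneg (Real.rpow_nonneg (by linarith [hc.1]) _) hγ1'.le
  rw [hval, abs_of_nonneg hvnonneg] at hnormint
  have hle2 : ((c - t₀) ^ (1 - γ) / (1 - γ)) * C1 ≤ (a ^ (1 - γ) / (1 - γ)) * C1 := by
    have h3 : (c - t₀) ^ (1 - γ) ≤ a ^ (1 - γ) :=
      Real.rpow_le_rpow (by linarith [hc.1]) (by linarith [hc.2]) hγ1'.le
    gcongr
  rw [Real.norm_eq_abs, abs_of_pos (by positivity : (0:ℝ) < 1 / Real.Gamma (1 - γ))]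
  exact mul_le_mul_of_nonneg_left (hnormint.trans hle2) (by positivity)

end MoreAux

/-- The operator `F` maps `C(J, Ω)` into itself and is Lipschitz for the sup norm, with
constant `q̃ = (r+1) L M a (1 + M ‖B‖ C̃ ∑_{k=1}^p |C_k|)`, where
`C̃ = a^(1-γ)/Γ(2-γ)`. -/
theorem Fop_lipschitz {Ω : Type*} [NormedAddCommGroup Ω] [NormedSpace ℝ Ω]
    [CompleteSpace Ω] {r p : ℕ}
    (t₀ a γ M L : ℝ) (ht₀ : 0 ≤ t₀) (ha : 0 < a) (hγ0 : 0 ≤ γ) (hγ1 : γ < 1)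
    (S K : ℝ → Ω →L[ℝ] Ω)
    (hScont : ∀ x : Ω, ContinuousOn (fun t => S t x) (Icc 0 a))
    (hKcont : ∀ x : Ω, ContinuousOn (fun t => K t x) (Icc 0 a))
    (hSbd : ∀ t ∈ Icc (0 : ℝ) a, ‖S t‖ ≤ M)
    (hKbd : ∀ t ∈ Icc (0 : ℝ) a, ‖K t‖ ≤ M)
    (tk : Fin p → ℝ) (htk : StrictMono tk)
    (htkJ : ∀ k, tk k ∈ Icc t₀ (t₀ + a))
    (Ck : Fin p → ℝ) (hCk : ∀ k, Ck k ≠ 0)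
    (B : Ω →L[ℝ] Ω) (u₀ : Ω)
    (b : Fin r → ℝ → ℝ)
    (hbcont : ∀ i, ContinuousOn (b i) (Icc t₀ (t₀ + a)))
    (hbmaps : ∀ i, MapsTo (b i) (Icc t₀ (t₀ + a)) (Icc t₀ (t₀ + a)))
    (f : ℝ → (Fin (r + 1) → Ω) → Ω)
    (hfcont : Continuous fun q : ℝ × (Fin (r + 1) → Ω) => f q.1 q.2)
    (hfLip : ∀ s ∈ Icc t₀ (t₀ + a), ∀ z zp : Fin (r + 1) → Ω,
      ‖f s z - f s zp‖ ≤ L * ∑ i, ‖z i - zp i‖) :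
    (∀ ω : ℝ → Ω, ContinuousOn ω (Icc t₀ (t₀ + a)) →
      ContinuousOn (Fop S K t₀ γ B u₀ tk Ck f b ω) (Icc t₀ (t₀ + a))) ∧
    (∀ ω ωp : ℝ → Ω, ContinuousOn ω (Icc t₀ (t₀ + a)) →
      ContinuousOn ωp (Icc t₀ (t₀ + a)) →
      (⨆ t : Icc t₀ (t₀ + a),
          ‖Fop S K t₀ γ B u₀ tk Ck f b ω t - Fop S K t₀ γ B u₀ tk Ck f b ωp t‖)
        ≤ ((r : ℝ) + 1) * L * M * a *
            (1 + M * ‖B‖ * (a ^ (1 - γ) / Real.Gamma (2 - γ)) * ∑ k, |Ck k|) *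
          ⨆ t : Icc t₀ (t₀ + a), ‖ω t - ωp t‖) := by
  have htJ : t₀ ≤ t₀ + a := by linarith
  have ht0J : t₀ ∈ Icc t₀ (t₀ + a) := ⟨le_refl _, htJ⟩
  haveI : Nonempty (Icc t₀ (t₀ + a)) := ⟨⟨t₀, ht0J⟩⟩
  have hM : 0 ≤ M := le_trans (norm_nonneg _) (hSbd 0 ⟨le_refl _, ha.le⟩)
  have hγ1' : (0:ℝ) < 1 - γ := by linarith
  have hΓpos : 0 < Real.Gamma (1 - γ) := Real.Gamma_pos_of_pos hγ1'
  have hΓ2 : Real.Gamma (2 - γ) = (1 - γ) * Real.Gamma (1 - γ) := by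
    rw [show (2:ℝ) - γ = (1 - γ) + 1 by ring, Real.Gamma_add_one (ne_of_gt hγ1')]
  have pack := fun (ω : ℝ → Ω) (hω : ContinuousOn ω (Icc t₀ (t₀ + a))) =>
    pack_lemma t₀ a ha K hKcont ⟨M, hKbd⟩ b hbcont hbmaps f hfcont ω hω
  have hSmap : MapsTo (fun t => t - t₀) (Icc t₀ (t₀ + a)) (Icc 0 a) := by
    intro t ht
    simp only [mem_Icc] at ht ⊢
    constructor <;> linarith [ht.1, ht.2]
  have hScontJ : ∀ x : Ω, ContinuousOn (fun t => S (t - t₀) x) (Icc t₀ (t₀ + a)) := fun x =>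
    (hScont x).comp ((continuous_id.sub continuous_const).continuousOn) hSmap
  have part1 : ∀ ω : ℝ → Ω, ContinuousOn ω (Icc t₀ (t₀ + a)) →
      ContinuousOn (Fop S K t₀ γ B u₀ tk Ck f b ω) (Icc t₀ (t₀ + a)) := by
    intro ω hω
    unfold Fop
    exact ((hScontJ (B u₀)).add (pack ω hω).1).sub (hScontJ _)
  refine ⟨part1, ?_⟩
  rcases subsingleton_or_nontrivial Ω with hΩ | hΩ
  · intro ω ωp _ _
    have hz : ∀ x : Ω, ‖x‖ = 0 := fun x => by rw [Subsingleton.elim x 0, norm_zero]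
    simp only [hz, ciSup_const, mul_zero, le_refl]
  intro ω ωp hω hωp
  obtain ⟨x0, hx0⟩ := exists_ne (0 : Ω)
  have hx0p : 0 < ‖x0‖ := norm_pos_iff.mpr hx0
  have hL : 0 ≤ L := by
    by_contra hneg
    push_neg at hneg
    have h := hfLip t₀ ht0J (fun _ => x0) 0
    simp only [Pi.zero_apply, sub_zero, Finset.sum_const, Finset.card_univ, Fintype.card_fin,
      nsmul_eq_mul] at h
    have hpos : (0:ℝ) < ((r:ℝ) + 1) * ‖x0‖ := by positivity
    have hcast : ((r + 1 : ℕ) : ℝ) = (r:ℝ) + 1 := by push_cast; ring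
    rw [hcast] at h
    nlinarith [norm_nonneg (f t₀ (fun _ => x0) - f t₀ 0)]
  set D := (⨆ t : Icc t₀ (t₀ + a), ‖ω t - ωp t‖) with hD
  obtain ⟨Cb, hCb⟩ := IsCompact.exists_bound_of_continuousOn isCompact_Icc (hω.sub hωp)
  have hbdd : BddAbove (Set.range fun t : Icc t₀ (t₀ + a) => ‖ω t - ωp t‖) := by
    refine ⟨Cb, ?_⟩
    rintro y ⟨⟨u, hu⟩, rfl⟩
    exact hCb u hu
  have hbd : ∀ u ∈ Icc t₀ (t₀ + a), ‖ω u - ωp u‖ ≤ D := fun u hu =>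
    le_ciSup hbdd (⟨u, hu⟩ : Icc t₀ (t₀ + a))
  have hD0 : 0 ≤ D := le_trans (norm_nonneg _) (hbd t₀ ht0J)
  have hgdiff : ∀ s ∈ Icc t₀ (t₀ + a),
      ‖f s (fArgs b ω s) - f s (fArgs b ωp s)‖ ≤ L * (((r : ℝ) + 1) * D) := by
    intro s hs
    refine (hfLip s hs _ _).trans ?_
    refine mul_le_mul_of_nonneg_left ?_ hL
    have hterm : ∀ i : Fin (r + 1), ‖fArgs b ω s i - fArgs b ωp s i‖ ≤ D := by
      intro i
      refine Fin.cases ?_ (fun j => ?_) i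
      · simpa only [fArgs, Fin.cons_zero] using hbd s hs
      · simpa only [fArgs, Fin.cons_succ] using hbd (b j s) (hbmaps j hs)
    calc ∑ i, ‖fArgs b ω s i - fArgs b ωp s i‖ ≤ ∑ _i : Fin (r + 1), D :=
          Finset.sum_le_sum fun i _ => hterm i
      _ = ((r : ℝ) + 1) * D := by
          simp only [Finset.sum_const, Finset.card_univ, Fintype.card_fin, nsmul_eq_mul]
          push_cast; ring
  have hE1 : 0 ≤ L * (((r : ℝ) + 1) * D) := by positivity
  have hC1 : 0 ≤ M * (L * (((r : ℝ) + 1) * D)) * a := by positivity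
  have hconvdiff : ∀ τ ∈ Icc t₀ (t₀ + a),
      ‖convMap K t₀ f b ω τ - convMap K t₀ f b ωp τ‖
        ≤ M * (L * (((r : ℝ) + 1) * D)) * a := by
    intro τ hτ
    unfold convMap
    rw [← intervalIntegral.integral_sub ((pack ω hω).2 τ hτ) ((pack ωp hωp).2 τ hτ)]
    simp_rw [← map_sub]
    have h1 : ‖∫ s in t₀..τ, K (τ - s) (f s (fArgs b ω s) - f s (fArgs b ωp s))‖
        ≤ M * (L * (((r : ℝ) + 1) * D)) * |τ - t₀| := by
      apply intervalIntegral.norm_integral_le_of_norm_le_const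
      intro x hx
      rw [Set.uIoc_of_le hτ.1] at hx
      have hxJ : x ∈ Icc t₀ (t₀ + a) := ⟨hx.1.le, hx.2.trans hτ.2⟩
      calc ‖K (τ - x) (f x (fArgs b ω x) - f x (fArgs b ωp x))‖
          ≤ ‖K (τ - x)‖ * ‖f x (fArgs b ω x) - f x (fArgs b ωp x)‖ :=
            ContinuousLinearMap.le_opNorm _ _
        _ ≤ M * (L * (((r : ℝ) + 1) * D)) :=
            mul_le_mul (hKbd _ ⟨by linarith [hx.2], by linarith [hx.1, hτ.2]⟩)
              (hgdiff x hxJ) (norm_nonneg _) hM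
    refine h1.trans ?_
    rw [abs_of_nonneg (by linarith [hτ.1])]
    exact mul_le_mul_of_nonneg_left (by linarith [hτ.2]) (by positivity)
  have fracB : ∀ k : Fin p,
      ‖fracInt (1 - γ) t₀ (convMap K t₀ f b ω) (tk k)
        - fracInt (1 - γ) t₀ (convMap K t₀ f b ωp) (tk k)‖
      ≤ (1 / Real.Gamma (1 - γ)) * ((a ^ (1 - γ) / (1 - γ))
          * (M * (L * (((r : ℝ) + 1) * D)) * a)) := fun k =>
    frac_bound_lemma t₀ a γ _ ha hγ1 hC1 _ _ (pack ω hω).1 (pack ωp hωp).1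
      hconvdiff (tk k) (htkJ k)
  have main : ∀ t ∈ Icc t₀ (t₀ + a),
      ‖Fop S K t₀ γ B u₀ tk Ck f b ω t - Fop S K t₀ γ B u₀ tk Ck f b ωp t‖
        ≤ M * (L * (((r : ℝ) + 1) * D)) * a
          + M * (‖B‖ * ((∑ k, |Ck k|) * ((1 / Real.Gamma (1 - γ))
            * ((a ^ (1 - γ) / (1 - γ)) * (M * (L * (((r : ℝ) + 1) * D)) * a))))) := by
    intro t ht
    have heq : Fop S K t₀ γ B u₀ tk Ck f b ω t - Fop S K t₀ γ B u₀ tk Ck f b ωp t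
        = (convMap K t₀ f b ω t - convMap K t₀ f b ωp t)
          - S (t - t₀) (B (∑ k, Ck k • (fracInt (1 - γ) t₀ (convMap K t₀ f b ω) (tk k)
            - fracInt (1 - γ) t₀ (convMap K t₀ f b ωp) (tk k)))) := by
      simp only [Fop, smul_sub, Finset.sum_sub_distrib, map_sub]
      abel
    rw [heq]
    refine (norm_sub_le _ _).trans (add_le_add (hconvdiff t ht) ?_)
    refine ((S (t - t₀)).le_opNorm _).trans ?_
    refine mul_le_mul (hSbd _ (hSmap ht)) ?_ (norm_nonneg _) hM
    refine (B.le_opNorm _).trans ?_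
    refine mul_le_mul_of_nonneg_left ?_ (norm_nonneg B)
    refine (norm_sum_le _ _).trans ?_
    calc ∑ k, ‖Ck k • (fracInt (1 - γ) t₀ (convMap K t₀ f b ω) (tk k)
            - fracInt (1 - γ) t₀ (convMap K t₀ f b ωp) (tk k))‖
        = ∑ k, |Ck k| * ‖fracInt (1 - γ) t₀ (convMap K t₀ f b ω) (tk k)
            - fracInt (1 - γ) t₀ (convMap K t₀ f b ωp) (tk k)‖ := by
          simp [norm_smul]
      _ ≤ ∑ k : Fin p, |Ck k| * ((1 / Real.Gamma (1 - γ)) * ((a ^ (1 - γ) / (1 - γ))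
            * (M * (L * (((r : ℝ) + 1) * D)) * a))) :=
          Finset.sum_le_sum fun k _ => mul_le_mul_of_nonneg_left (fracB k) (abs_nonneg _)
      _ = (∑ k, |Ck k|) * ((1 / Real.Gamma (1 - γ)) * ((a ^ (1 - γ) / (1 - γ))
            * (M * (L * (((r : ℝ) + 1) * D)) * a))) := by rw [Finset.sum_mul]
  have hfinal : M * (L * (((r : ℝ) + 1) * D)) * a
      + M * (‖B‖ * ((∑ k, |Ck k|) * ((1 / Real.Gamma (1 - γ))
        * ((a ^ (1 - γ) / (1 - γ)) * (M * (L * (((r : ℝ) + 1) * D)) * a)))))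
      = ((r : ℝ) + 1) * L * M * a *
          (1 + M * ‖B‖ * (a ^ (1 - γ) / Real.Gamma (2 - γ)) * ∑ k, |Ck k|) * D := by
    rw [hΓ2]
    field_simp
  calc (⨆ t : Icc t₀ (t₀ + a),
        ‖Fop S K t₀ γ B u₀ tk Ck f b ω t - Fop S K t₀ γ B u₀ tk Ck f b ωp t‖)
      ≤ M * (L * (((r : ℝ) + 1) * D)) * a
          + M * (‖B‖ * ((∑ k, |Ck k|) * ((1 / Real.Gamma (1 - γ))
            * ((a ^ (1 - γ) / (1 - γ)) * (M * (L * (((r : ℝ) + 1) * D)) * a))))) :=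
        ciSup_le fun t => main t t.2
    _ = _ := hfinal
end

section
/- With the data of the nonlocal fractional evolution setup, assume in addition that q̃ := (r+1)·L·M·a·(1 + M‖B‖·C̃·Σ_{k=1}^p |C_k|) < 1, where C̃ = a^{1−γ}/Γ(2−γ). Then there exists exactly one continuous function u : J → Ω satisfying the mild-solution integral equation u(t) = S(t−t₀)Bu₀ + ∫_{t₀}^t K(t−s) f(s,u(s),u(b₁(s)),…,u(b_r(s))) ds − S(t−t₀) B Σ_{k=1}^p C_k (I_{t₀⁺}^{1−γ} h_u)(t_k) for all t ∈ J; i.e., the nonlocal fractional evolution problem has a unique mild solution. -/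
open Set intervalIntegral MeasureTheory

/-- A strongly continuous, uniformly bounded family of operators is jointly continuous. -/
lemma strong_joint_continuous {Ω : Type*} [NormedAddCommGroup Ω] [NormedSpace ℝ Ω]
    {K : ℝ → Ω →L[ℝ] Ω} {M : ℝ} (hc : ∀ x, Continuous fun t => K t x)
    (hb : ∀ t, ‖K t‖ ≤ M) : Continuous fun q : ℝ × Ω => K q.1 q.2 := by
  rw [continuous_iff_continuousAt]
  rintro ⟨t, x⟩
  have h1 : Filter.Tendsto (fun q : ℝ × Ω => K q.1 (q.2 - x)) (nhds (t, x)) (nhds 0) := by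
    have hle : ∀ q : ℝ × Ω, ‖K q.1 (q.2 - x)‖ ≤ M * ‖q.2 - x‖ := fun q =>
      ((K q.1).le_opNorm _).trans (mul_le_mul_of_nonneg_right (hb q.1) (norm_nonneg _))
    have hco : Continuous fun q : ℝ × Ω => M * ‖q.2 - x‖ :=
      continuous_const.mul ((continuous_snd.sub continuous_const).norm)
    have h := hco.tendsto ((t, x) : ℝ × Ω)
    simp only [sub_self, norm_zero, mul_zero] at h
    exact squeeze_zero_norm hle h
  have h2 : Filter.Tendsto (fun q : ℝ × Ω => K q.1 x) (nhds (t, x)) (nhds (K t x)) :=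
    (((hc x).tendsto t).comp continuousAt_fst)
  have h3 := h1.add h2
  rw [zero_add] at h3
  exact h3.congr fun q => by rw [← map_add, sub_add_cancel]

/-- Interval integrability of a scalar integrable function times a continuous vector function. -/
lemma IntervalIntegrable.smul_continuous {Ω : Type*} [NormedAddCommGroup Ω] [NormedSpace ℝ Ω]
    {φ : ℝ → ℝ} {g : ℝ → Ω} {a b : ℝ} (hφ : IntervalIntegrable φ volume a b)
    (hg : Continuous g) : IntervalIntegrable (fun x => φ x • g x) volume a b := by
  rw [intervalIntegrable_iff] at hφ ⊢
  obtain ⟨C, hC⟩ := (isCompact_uIcc (a := a) (b := b)).exists_bound_of_continuousOn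
    hg.continuousOn
  exact hφ.smul_of_top_left (MeasureTheory.memLp_top_of_bound
    (hg.aestronglyMeasurable.restrict) C
    ((ae_restrict_iff' measurableSet_uIoc).2
      (Filter.Eventually.of_forall fun x hx => hC x (uIoc_subset_uIcc hx))))

/-- Existence and uniqueness of the mild solution: under the contraction condition
`q̃ = (r+1) L M a (1 + M ‖B‖ C̃ ∑_{k=1}^p |C_k|) < 1` with `C̃ = a^(1-γ)/Γ(2-γ)`,
there is exactly one continuous `u : J → Ω` satisfying the mild-solution integral
equation `u(t) = S(t-t₀) B u₀ + ∫_{t₀}^t K(t-s) f(s, u(s), u(b₁(s)), …, u(b_r(s))) ds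
 - S(t-t₀) B ∑_{k=1}^p C_k (I_{t₀⁺}^{1-γ} h_u)(t_k)` on `J`. -/
theorem mild_solution_exists_unique {Ω : Type*} [NormedAddCommGroup Ω] [NormedSpace ℝ Ω]
    [CompleteSpace Ω] {r p : ℕ}
    (t₀ a γ M L : ℝ) (ht₀ : 0 ≤ t₀) (ha : 0 < a) (hγ0 : 0 ≤ γ) (hγ1 : γ < 1)
    (S K : ℝ → Ω →L[ℝ] Ω)
    (hScont : ∀ x : Ω, ContinuousOn (fun t => S t x) (Icc 0 a))
    (hKcont : ∀ x : Ω, ContinuousOn (fun t => K t x) (Icc 0 a))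
    (hSbd : ∀ t ∈ Icc (0 : ℝ) a, ‖S t‖ ≤ M)
    (hKbd : ∀ t ∈ Icc (0 : ℝ) a, ‖K t‖ ≤ M)
    (tk : Fin p → ℝ) (htk : StrictMono tk)
    (htkJ : ∀ k, tk k ∈ Icc t₀ (t₀ + a))
    (Ck : Fin p → ℝ) (hCk : ∀ k, Ck k ≠ 0)
    (B : Ω →L[ℝ] Ω) (u₀ : Ω)
    (b : Fin r → ℝ → ℝ)
    (hbcont : ∀ i, ContinuousOn (b i) (Icc t₀ (t₀ + a)))
    (hbmaps : ∀ i, MapsTo (b i) (Icc t₀ (t₀ + a)) (Icc t₀ (t₀ + a)))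
    (f : ℝ → (Fin (r + 1) → Ω) → Ω)
    (hfcont : Continuous fun q : ℝ × (Fin (r + 1) → Ω) => f q.1 q.2)
    (hfLip : ∀ s ∈ Icc t₀ (t₀ + a), ∀ z zp : Fin (r + 1) → Ω,
      ‖f s z - f s zp‖ ≤ L * ∑ i, ‖z i - zp i‖)
    (hq : ((r : ℝ) + 1) * L * M * a *
        (1 + M * ‖B‖ * (a ^ (1 - γ) / Real.Gamma (2 - γ)) * ∑ k, |Ck k|) < 1) :
    ∃ u : ℝ → Ω,
      (ContinuousOn u (Icc t₀ (t₀ + a)) ∧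
        ∀ t ∈ Icc t₀ (t₀ + a), u t = Fop S K t₀ γ B u₀ tk Ck f b u t) ∧
      ∀ v : ℝ → Ω, ContinuousOn v (Icc t₀ (t₀ + a)) →
        (∀ t ∈ Icc t₀ (t₀ + a), v t = Fop S K t₀ γ B u₀ tk Ck f b v t) →
        ∀ t ∈ Icc t₀ (t₀ + a), v t = u t := by
  have hJ : t₀ ≤ t₀ + a := by linarith
  have hM0 : 0 ≤ M := le_trans (norm_nonneg (S 0)) (hSbd 0 ⟨le_rfl, ha.le⟩)
  -- replace L by its nonnegative part
  set L' : ℝ := max L 0 with hL'def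
  have hL'0 : 0 ≤ L' := le_max_right _ _
  have hfLip' : ∀ s ∈ Icc t₀ (t₀ + a), ∀ z zp : Fin (r + 1) → Ω,
      ‖f s z - f s zp‖ ≤ L' * ∑ i, ‖z i - zp i‖ := fun s hs z zp =>
    (hfLip s hs z zp).trans (mul_le_mul_of_nonneg_right (le_max_left _ _)
      (Finset.sum_nonneg fun i _ => norm_nonneg _))
  have hΓpos : 0 < Real.Gamma (2 - γ) := Real.Gamma_pos_of_pos (by linarith)
  have hΓ1pos : 0 < Real.Gamma (1 - γ) := Real.Gamma_pos_of_pos (by linarith)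
  have hΓeq : Real.Gamma (2 - γ) = (1 - γ) * Real.Gamma (1 - γ) := by
    have h1 : (2 : ℝ) - γ = (1 - γ) + 1 := by ring
    rw [h1, Real.Gamma_add_one (by intro h; rw [sub_eq_zero] at h; linarith)]
  set Ct : ℝ := a ^ (1 - γ) / Real.Gamma (2 - γ) with hCtdef
  have hCt0 : 0 ≤ Ct := div_nonneg (Real.rpow_nonneg ha.le _) hΓpos.le
  have hCksum : (0 : ℝ) ≤ ∑ k, |Ck k| := Finset.sum_nonneg fun _ _ => abs_nonneg _
  set X1 : ℝ := 1 + M * ‖B‖ * Ct * ∑ k, |Ck k| with hX1def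
  have hX10 : 0 ≤ X1 := by
    have : 0 ≤ M * ‖B‖ * Ct * ∑ k, |Ck k| :=
      mul_nonneg (mul_nonneg (mul_nonneg hM0 (norm_nonneg _)) hCt0) hCksum
    linarith
  set q : ℝ := ((r : ℝ) + 1) * L' * M * a * X1 with hqdef
  have hq0 : 0 ≤ q :=
    mul_nonneg (mul_nonneg (mul_nonneg (mul_nonneg (by positivity) hL'0) hM0) ha.le) hX10
  have hq1 : q < 1 := by
    rcases le_or_gt 0 L with hL | hL
    · rw [hqdef, hL'def, max_eq_left hL]; exact hq
    · rw [hqdef, hL'def, max_eq_right hL.le]; simp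
  -- clamps
  set c0 : ℝ → ℝ := fun t => min a (max t 0) with hc0def
  have hc0 : Continuous c0 := continuous_const.min (continuous_id.max continuous_const)
  have hc0mem : ∀ t, c0 t ∈ Icc (0 : ℝ) a := fun t =>
    ⟨le_min ha.le (le_max_right _ _), min_le_left _ _⟩
  have hc0id : ∀ t ∈ Icc (0 : ℝ) a, c0 t = t := fun t ht => by
    rw [hc0def]; simp only []; rw [max_eq_left ht.1, min_eq_right ht.2]
  set S' : ℝ → Ω →L[ℝ] Ω := fun t => S (c0 t) with hS'def
  set K' : ℝ → Ω →L[ℝ] Ω := fun t => K (c0 t) with hK'def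
  have hS'c : ∀ x : Ω, Continuous fun t => S' t x := fun x =>
    (hScont x).comp_continuous hc0 hc0mem
  have hK'c : ∀ x : Ω, Continuous fun t => K' t x := fun x =>
    (hKcont x).comp_continuous hc0 hc0mem
  have hS'b : ∀ t, ‖S' t‖ ≤ M := fun t => hSbd _ (hc0mem t)
  have hK'b : ∀ t, ‖K' t‖ ≤ M := fun t => hKbd _ (hc0mem t)
  have hK'j : Continuous fun z : ℝ × Ω => K' z.1 z.2 := strong_joint_continuous hK'c hK'b
  set cJ : ℝ → ℝ := fun t => min (t₀ + a) (max t t₀) with hcJdef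
  have hcJ : Continuous cJ := continuous_const.min (continuous_id.max continuous_const)
  have hcJmem : ∀ t, cJ t ∈ Icc t₀ (t₀ + a) := fun t =>
    ⟨le_min hJ (le_max_right _ _), min_le_left _ _⟩
  have hcJid : ∀ t ∈ Icc t₀ (t₀ + a), cJ t = t := fun t ht => by
    rw [hcJdef]; simp only []; rw [max_eq_left ht.1, min_eq_right ht.2]
  set b' : Fin r → ℝ → ℝ := fun i s => cJ (b i (cJ s)) with hb'def
  have hb'c : ∀ i, Continuous (b' i) := fun i =>
    hcJ.comp ((hbcont i).comp_continuous hcJ hcJmem)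
  have hb'eq : ∀ i, ∀ s ∈ Icc t₀ (t₀ + a), b' i s = b i s := fun i s hs => by
    rw [hb'def]; simp only []; rw [hcJid s hs, hcJid _ (hbmaps i hs)]
  -- the nonlinearity composed with a function
  have hgc : ∀ ω : ℝ → Ω, Continuous ω → Continuous fun s => f s (fArgs b' ω s) := by
    intro ω hω
    have hargs : Continuous fun s => fArgs b' ω s := by
      apply continuous_pi
      intro i
      refine Fin.cases ?_ (fun j => ?_) i
      · simpa [fArgs] using hω
      · simpa [fArgs, Function.comp_def] using hω.comp (hb'c j)
    exact hfcont.comp (continuous_id.prodMk hargs)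
  -- continuity of the convolution map
  have hconvic : ∀ (ω : ℝ → Ω), Continuous ω → ∀ τ : ℝ,
      Continuous fun s => (K' (τ - s)) (f s (fArgs b' ω s)) := by
    intro ω hω τ
    exact hK'j.comp (((continuous_const.sub continuous_id).prodMk (hgc ω hω)))
  have hconvint : ∀ (ω : ℝ → Ω), Continuous ω → ∀ τ c1 c2 : ℝ,
      IntervalIntegrable (fun s => (K' (τ - s)) (f s (fArgs b' ω s))) volume c1 c2 :=
    fun ω hω τ c1 c2 => (hconvic ω hω τ).intervalIntegrable c1 c2
  have hconvc : ∀ ω : ℝ → Ω, Continuous ω → Continuous (convMap K' t₀ f b' ω) := by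
    intro ω hω
    have hunc : Continuous (Function.uncurry fun τ s => (K' (τ - s)) (f s (fArgs b' ω s))) :=
      hK'j.comp (((continuous_fst.sub continuous_snd)).prodMk
        ((hgc ω hω).comp continuous_snd))
    have := intervalIntegral.continuous_parametric_intervalIntegral_of_continuous
      (f := fun τ s => (K' (τ - s)) (f s (fArgs b' ω s))) (μ := volume)
      (a₀ := t₀) hunc (s := fun τ : ℝ => τ) continuous_id
    exact this
  -- the extension operator
  set ex : C(Icc t₀ (t₀ + a), Ω) → ℝ → Ω := fun ω t => ω ⟨cJ t, hcJmem t⟩ with hexdef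
  have hexc : ∀ ω, Continuous (ex ω) := fun ω =>
    ω.continuous.comp (hcJ.subtype_mk hcJmem)
  have hexeq : ∀ (ω : C(Icc t₀ (t₀ + a), Ω)) (t : ℝ) (ht : t ∈ Icc t₀ (t₀ + a)),
      ex ω t = ω ⟨t, ht⟩ := by
    intro ω t ht
    rw [hexdef]
    simp only []
    congr 1
    exact Subtype.ext (hcJid t ht)
  have hexd : ∀ (ω ω' : C(Icc t₀ (t₀ + a), Ω)) (t : ℝ),
      ‖ex ω t - ex ω' t‖ ≤ dist ω ω' := fun ω ω' t => by
    rw [← dist_eq_norm]; exact ContinuousMap.dist_apply_le_dist _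
  -- the solution operator on C(J, Ω)
  have hFopc : ∀ ω : ℝ → Ω, Continuous ω →
      Continuous (Fop S' K' t₀ γ B u₀ tk Ck f b' ω) := by
    intro ω hω
    unfold Fop
    exact (((hS'c (B u₀)).comp (continuous_id.sub continuous_const)).add
      (hconvc ω hω)).sub ((hS'c _).comp (continuous_id.sub continuous_const))
  set Tmap : C(Icc t₀ (t₀ + a), Ω) → C(Icc t₀ (t₀ + a), Ω) := fun ω =>
    ⟨fun x => Fop S' K' t₀ γ B u₀ tk Ck f b' (ex ω) x,
      (hFopc (ex ω) (hexc ω)).comp continuous_subtype_val⟩ with hTdef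
  -- weight integrability for the fractional integral
  have hw : ∀ c : ℝ, IntervalIntegrable (fun s => (c - s) ^ ((1 - γ) - 1)) volume t₀ c := by
    intro c
    have h0 := IntervalIntegrable.comp_sub_left (f := fun x : ℝ => x ^ ((1 - γ) - 1))
      (a := c - t₀) (b := 0) (intervalIntegrable_rpow' (by linarith)) c
    simpa using h0
  have hwval : ∀ c ∈ Icc t₀ (t₀ + a),
      (∫ s in t₀..c, (c - s) ^ ((1 - γ) - 1)) = (c - t₀) ^ (1 - γ) / (1 - γ) := by
    intro c hc
    have h1 : (∫ s in t₀..c, (c - s) ^ ((1 - γ) - 1)) =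
        ∫ x in (c - c)..(c - t₀), x ^ ((1 - γ) - 1) :=
      intervalIntegral.integral_comp_sub_left (fun x => x ^ ((1 - γ) - 1)) c
    rw [h1, sub_self]
    have he : (1 - γ) - 1 + 1 = 1 - γ := by ring
    rw [integral_rpow (Or.inl (by linarith)), he,
      Real.zero_rpow (by intro h; rw [sub_eq_zero] at h; linarith : (1:ℝ) - γ ≠ 0), sub_zero]
  -- the contraction estimate
  have key : ∀ ω ω' : C(Icc t₀ (t₀ + a), Ω), dist (Tmap ω) (Tmap ω') ≤ q * dist ω ω' := by
    intro ω ω'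
    set d : ℝ := dist ω ω' with hddef
    have hd0 : 0 ≤ d := dist_nonneg
    have hr1 : (0 : ℝ) ≤ (r : ℝ) + 1 := by positivity
    have hgd : ∀ s ∈ Icc t₀ (t₀ + a),
        ‖f s (fArgs b' (ex ω) s) - f s (fArgs b' (ex ω') s)‖ ≤ L' * (((r : ℝ) + 1) * d) := by
      intro s hs
      refine (hfLip' s hs _ _).trans (mul_le_mul_of_nonneg_left ?_ hL'0)
      have hterm : ∀ i : Fin (r + 1), ‖fArgs b' (ex ω) s i - fArgs b' (ex ω') s i‖ ≤ d := by
        intro i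
        refine Fin.cases ?_ (fun j => ?_) i
        · simpa [fArgs] using hexd ω ω' s
        · simpa [fArgs] using hexd ω ω' (b' j s)
      calc (∑ i, ‖fArgs b' (ex ω) s i - fArgs b' (ex ω') s i‖)
          ≤ ∑ _i : Fin (r + 1), d := Finset.sum_le_sum fun i _ => hterm i
        _ = ((r : ℝ) + 1) * d := by
            rw [Finset.sum_const, Finset.card_univ, Fintype.card_fin, nsmul_eq_mul]
            push_cast; ring
    have hconvd : ∀ τ ∈ Icc t₀ (t₀ + a),
        ‖convMap K' t₀ f b' (ex ω) τ - convMap K' t₀ f b' (ex ω') τ‖ ≤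
          M * (L' * (((r : ℝ) + 1) * d)) * a := by
      intro τ hτ
      unfold convMap
      rw [← intervalIntegral.integral_sub (hconvint _ (hexc ω) τ t₀ τ)
        (hconvint _ (hexc ω') τ t₀ τ)]
      have hb1 : ∀ x ∈ uIoc t₀ τ,
          ‖(K' (τ - x)) (f x (fArgs b' (ex ω) x)) - (K' (τ - x)) (f x (fArgs b' (ex ω') x))‖ ≤
            M * (L' * (((r : ℝ) + 1) * d)) := by
        intro x hx
        rw [uIoc_of_le hτ.1] at hx
        have hxJ : x ∈ Icc t₀ (t₀ + a) := ⟨hx.1.le, hx.2.trans hτ.2⟩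
        rw [← map_sub]
        exact ((K' _).le_opNorm _).trans
          (mul_le_mul (hK'b _) (hgd x hxJ) (norm_nonneg _) hM0)
      refine (intervalIntegral.norm_integral_le_of_norm_le_const hb1).trans ?_
      rw [abs_of_nonneg (by linarith [hτ.1] : (0 : ℝ) ≤ τ - t₀)]
      exact mul_le_mul_of_nonneg_left (by linarith [hτ.2])
        (mul_nonneg hM0 (mul_nonneg hL'0 (mul_nonneg hr1 hd0)))
    set Cc : ℝ := M * (L' * (((r : ℝ) + 1) * d)) * a with hCcdef
    have hCc0 : 0 ≤ Cc :=
      mul_nonneg (mul_nonneg hM0 (mul_nonneg hL'0 (mul_nonneg hr1 hd0))) ha.le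
    have hfrd : ∀ k : Fin p,
        ‖fracInt (1 - γ) t₀ (convMap K' t₀ f b' (ex ω)) (tk k) -
          fracInt (1 - γ) t₀ (convMap K' t₀ f b' (ex ω')) (tk k)‖ ≤ Cc * Ct := by
      intro k
      have hcJk := htkJ k
      have hi1 : IntervalIntegrable
          (fun s => ((tk k - s) ^ ((1 - γ) - 1)) • convMap K' t₀ f b' (ex ω) s)
          volume t₀ (tk k) := (hw (tk k)).smul_continuous (hconvc _ (hexc ω))
      have hi2 : IntervalIntegrable
          (fun s => ((tk k - s) ^ ((1 - γ) - 1)) • convMap K' t₀ f b' (ex ω') s)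
          volume t₀ (tk k) := (hw (tk k)).smul_continuous (hconvc _ (hexc ω'))
      unfold fracInt
      rw [← smul_sub, ← intervalIntegral.integral_sub hi1 hi2]
      have hcomb : EqOn
          (fun s => ((tk k - s) ^ ((1 - γ) - 1)) • convMap K' t₀ f b' (ex ω) s -
            ((tk k - s) ^ ((1 - γ) - 1)) • convMap K' t₀ f b' (ex ω') s)
          (fun s => ((tk k - s) ^ ((1 - γ) - 1)) •
            (convMap K' t₀ f b' (ex ω) s - convMap K' t₀ f b' (ex ω') s))
          (uIcc t₀ (tk k)) := fun s _ => (smul_sub _ _ _).symm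
      rw [intervalIntegral.integral_congr hcomb, norm_smul]
      have hb2 : ∀ᵐ s ∂(MeasureTheory.volume.restrict (uIoc t₀ (tk k))),
          ‖((tk k - s) ^ ((1 - γ) - 1)) •
            (convMap K' t₀ f b' (ex ω) s - convMap K' t₀ f b' (ex ω') s)‖ ≤
            Cc * (tk k - s) ^ ((1 - γ) - 1) := by
        refine (MeasureTheory.ae_restrict_iff' measurableSet_uIoc).2
          (Filter.Eventually.of_forall fun s hs => ?_)
        rw [uIoc_of_le hcJk.1] at hs
        have hsJ : s ∈ Icc t₀ (t₀ + a) := ⟨hs.1.le, hs.2.trans hcJk.2⟩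
        have hwnn : 0 ≤ (tk k - s) ^ ((1 - γ) - 1) :=
          Real.rpow_nonneg (by linarith [hs.2]) _
        rw [norm_smul, Real.norm_eq_abs, abs_of_nonneg hwnn, mul_comm Cc]
        exact mul_le_mul_of_nonneg_left (hconvd s hsJ) hwnn
      have hb3 := intervalIntegral.norm_integral_le_abs_of_norm_le hb2 ((hw (tk k)).const_mul Cc)
      have hIval : (∫ s in t₀..tk k, Cc * (tk k - s) ^ ((1 - γ) - 1)) =
          Cc * ((tk k - t₀) ^ (1 - γ) / (1 - γ)) := by
        rw [intervalIntegral.integral_const_mul, hwval (tk k) hcJk]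
      rw [hIval, abs_of_nonneg (mul_nonneg hCc0 (div_nonneg
        (Real.rpow_nonneg (by linarith [hcJk.1]) _) (by linarith)))] at hb3
      have hIle : Cc * ((tk k - t₀) ^ (1 - γ) / (1 - γ)) ≤ Cc * (a ^ (1 - γ) / (1 - γ)) := by
        refine mul_le_mul_of_nonneg_left ?_ hCc0
        have hrp : (tk k - t₀) ^ (1 - γ) ≤ a ^ (1 - γ) :=
          Real.rpow_le_rpow (by linarith [hcJk.1]) (by linarith [hcJk.2]) (by linarith)
        exact (div_le_div_iff_of_pos_right (by linarith)).2 hrp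
      calc ‖(1 : ℝ) / Real.Gamma (1 - γ)‖ * ‖∫ s in t₀..tk k,
            ((tk k - s) ^ ((1 - γ) - 1)) •
              (convMap K' t₀ f b' (ex ω) s - convMap K' t₀ f b' (ex ω') s)‖
          ≤ (1 / Real.Gamma (1 - γ)) * (Cc * (a ^ (1 - γ) / (1 - γ))) := by
            rw [Real.norm_eq_abs, abs_of_nonneg (by positivity)]
            exact mul_le_mul_of_nonneg_left (hb3.trans hIle) (by positivity)
        _ = Cc * Ct := by
            rw [hCtdef, hΓeq, div_mul_eq_mul_div, one_mul, mul_div_assoc, div_div]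
    rw [ContinuousMap.dist_le (mul_nonneg hq0 hd0)]
    rintro ⟨t, ht⟩
    rw [dist_eq_norm]
    show ‖Fop S' K' t₀ γ B u₀ tk Ck f b' (ex ω) t -
      Fop S' K' t₀ γ B u₀ tk Ck f b' (ex ω') t‖ ≤ q * d
    have h1 : (∑ k, Ck k •
          (fracInt (1 - γ) t₀ (convMap K' t₀ f b' (ex ω)) (tk k) -
           fracInt (1 - γ) t₀ (convMap K' t₀ f b' (ex ω')) (tk k))) =
        (∑ k, Ck k • fracInt (1 - γ) t₀ (convMap K' t₀ f b' (ex ω)) (tk k)) -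
        (∑ k, Ck k • fracInt (1 - γ) t₀ (convMap K' t₀ f b' (ex ω')) (tk k)) := by
      rw [← Finset.sum_sub_distrib]
      exact Finset.sum_congr rfl fun k _ => smul_sub _ _ _
    have halg : Fop S' K' t₀ γ B u₀ tk Ck f b' (ex ω) t -
        Fop S' K' t₀ γ B u₀ tk Ck f b' (ex ω') t =
        (convMap K' t₀ f b' (ex ω) t - convMap K' t₀ f b' (ex ω') t) -
          (S' (t - t₀)) (B (∑ k, Ck k •
            (fracInt (1 - γ) t₀ (convMap K' t₀ f b' (ex ω)) (tk k) -
             fracInt (1 - γ) t₀ (convMap K' t₀ f b' (ex ω')) (tk k)))) := by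
      unfold Fop
      rw [h1, map_sub B, map_sub (S' (t - t₀))]
      abel
    rw [halg]
    refine (norm_sub_le _ _).trans ?_
    have h2 : ‖(S' (t - t₀)) (B (∑ k, Ck k •
        (fracInt (1 - γ) t₀ (convMap K' t₀ f b' (ex ω)) (tk k) -
         fracInt (1 - γ) t₀ (convMap K' t₀ f b' (ex ω')) (tk k))))‖ ≤
        M * (‖B‖ * ((∑ k, |Ck k|) * (Cc * Ct))) := by
      refine ((S' _).le_opNorm _).trans ?_
      refine mul_le_mul (hS'b _) ?_ (norm_nonneg _) hM0
      refine (B.le_opNorm _).trans ?_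
      refine mul_le_mul_of_nonneg_left ?_ (norm_nonneg B)
      refine (norm_sum_le _ _).trans ?_
      calc (∑ k, ‖Ck k • (fracInt (1 - γ) t₀ (convMap K' t₀ f b' (ex ω)) (tk k) -
              fracInt (1 - γ) t₀ (convMap K' t₀ f b' (ex ω')) (tk k))‖)
          = ∑ k, |Ck k| * ‖fracInt (1 - γ) t₀ (convMap K' t₀ f b' (ex ω)) (tk k) -
              fracInt (1 - γ) t₀ (convMap K' t₀ f b' (ex ω')) (tk k)‖ := by
            simp [norm_smul, Real.norm_eq_abs]
        _ ≤ ∑ k, |Ck k| * (Cc * Ct) := Finset.sum_le_sum fun k _ =>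
            mul_le_mul_of_nonneg_left (hfrd k) (abs_nonneg _)
        _ = (∑ k, |Ck k|) * (Cc * Ct) := by rw [← Finset.sum_mul]
    have h3 : ‖convMap K' t₀ f b' (ex ω) t - convMap K' t₀ f b' (ex ω') t‖ ≤ Cc :=
      hconvd t ht
    have h4 : Cc + M * (‖B‖ * ((∑ k, |Ck k|) * (Cc * Ct))) = q * d := by
      rw [hqdef, hX1def, hCcdef]; ring
    linarith
  -- Banach fixed point
  have hlip : LipschitzWith (Real.toNNReal q) Tmap :=
    LipschitzWith.of_dist_le_mul fun ω ω' => (key ω ω').trans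
      (mul_le_mul_of_nonneg_right (Real.le_coe_toNNReal q) dist_nonneg)
  have hcontr : ContractingWith (Real.toNNReal q) Tmap := by
    refine ⟨?_, hlip⟩
    rw [← Real.toNNReal_one]
    exact (Real.toNNReal_lt_toNNReal_iff (by norm_num)).2 hq1
  haveI : Nonempty C(Icc t₀ (t₀ + a), Ω) := ⟨ContinuousMap.const _ 0⟩
  set φ : C(Icc t₀ (t₀ + a), Ω) := ContractingWith.fixedPoint Tmap hcontr with hφdef
  have hfix : Tmap φ = φ := hcontr.fixedPoint_isFixedPt
  -- Fop with clamped data equals Fop with original data on J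
  have hE : ∀ (ω : ℝ → Ω), ∀ t ∈ Icc t₀ (t₀ + a),
      Fop S' K' t₀ γ B u₀ tk Ck f b' ω t = Fop S K t₀ γ B u₀ tk Ck f b ω t := by
    intro ω t ht
    have hconvE : ∀ τ ∈ Icc t₀ (t₀ + a), convMap K' t₀ f b' ω τ = convMap K t₀ f b ω τ := by
      intro τ hτ
      apply intervalIntegral.integral_congr
      intro s hs
      beta_reduce
      rw [uIcc_of_le hτ.1] at hs
      have hsJ : s ∈ Icc t₀ (t₀ + a) := ⟨hs.1, hs.2.trans hτ.2⟩
      have hK1 : K' (τ - s) = K (τ - s) := by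
        rw [hK'def]
        simp only []
        rw [hc0id (τ - s) ⟨by linarith [hs.2], by linarith [hs.1, hτ.2]⟩]
      have hA1 : fArgs b' ω s = fArgs b ω s := by
        funext i
        refine Fin.cases ?_ (fun j => ?_) i
        · simp [fArgs]
        · simp [fArgs, hb'eq j s hsJ]
      rw [hK1, hA1]
    have hfrE : ∀ k : Fin p, fracInt (1 - γ) t₀ (convMap K' t₀ f b' ω) (tk k) =
        fracInt (1 - γ) t₀ (convMap K t₀ f b ω) (tk k) := by
      intro k
      unfold fracInt
      congr 1
      apply intervalIntegral.integral_congr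
      intro s hs
      beta_reduce
      rw [uIcc_of_le (htkJ k).1] at hs
      have hsJ : s ∈ Icc t₀ (t₀ + a) := ⟨hs.1, hs.2.trans (htkJ k).2⟩
      rw [hconvE s hsJ]
    have hS'E : S' (t - t₀) = S (t - t₀) := by
      rw [hS'def]
      simp only []
      rw [hc0id (t - t₀) ⟨by linarith [ht.1], by linarith [ht.2]⟩]
    have hsumE : (∑ k, Ck k • fracInt (1 - γ) t₀ (convMap K' t₀ f b' ω) (tk k)) =
        ∑ k, Ck k • fracInt (1 - γ) t₀ (convMap K t₀ f b ω) (tk k) :=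
      Finset.sum_congr rfl fun k _ => by rw [hfrE k]
    unfold Fop
    rw [hS'E, hconvE t ht, hsumE]
  -- Fop congruence in ω on J
  have hF : ∀ (ω ω' : ℝ → Ω), (∀ s ∈ Icc t₀ (t₀ + a), ω s = ω' s) →
      ∀ t ∈ Icc t₀ (t₀ + a),
        Fop S K t₀ γ B u₀ tk Ck f b ω t = Fop S K t₀ γ B u₀ tk Ck f b ω' t := by
    intro ω ω' hωω t ht
    have hconvF : ∀ τ ∈ Icc t₀ (t₀ + a), convMap K t₀ f b ω τ = convMap K t₀ f b ω' τ := by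
      intro τ hτ
      apply intervalIntegral.integral_congr
      intro s hs
      beta_reduce
      rw [uIcc_of_le hτ.1] at hs
      have hsJ : s ∈ Icc t₀ (t₀ + a) := ⟨hs.1, hs.2.trans hτ.2⟩
      have hA1 : fArgs b ω s = fArgs b ω' s := by
        funext i
        refine Fin.cases ?_ (fun j => ?_) i
        · simp [fArgs, hωω s hsJ]
        · simp [fArgs, hωω _ (hbmaps j hsJ)]
      rw [hA1]
    have hfrF : ∀ k : Fin p, fracInt (1 - γ) t₀ (convMap K t₀ f b ω) (tk k) =
        fracInt (1 - γ) t₀ (convMap K t₀ f b ω') (tk k) := by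
      intro k
      unfold fracInt
      congr 1
      apply intervalIntegral.integral_congr
      intro s hs
      beta_reduce
      rw [uIcc_of_le (htkJ k).1] at hs
      have hsJ : s ∈ Icc t₀ (t₀ + a) := ⟨hs.1, hs.2.trans (htkJ k).2⟩
      rw [hconvF s hsJ]
    have hsumF : (∑ k, Ck k • fracInt (1 - γ) t₀ (convMap K t₀ f b ω) (tk k)) =
        ∑ k, Ck k • fracInt (1 - γ) t₀ (convMap K t₀ f b ω') (tk k) :=
      Finset.sum_congr rfl fun k _ => by rw [hfrF k]
    unfold Fop
    rw [hconvF t ht, hsumF]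
  refine ⟨ex φ, ⟨(hexc φ).continuousOn, ?_⟩, ?_⟩
  · intro t ht
    have h1 : ex φ t = φ ⟨t, ht⟩ := hexeq φ t ht
    have h2 : φ ⟨t, ht⟩ = Fop S' K' t₀ γ B u₀ tk Ck f b' (ex φ) t := by
      conv_lhs => rw [← hfix]
      rw [hTdef]
      simp only [ContinuousMap.coe_mk]
    rw [h1, h2]
    exact hE (ex φ) t ht
  · intro v hv hveq t ht
    set ν : C(Icc t₀ (t₀ + a), Ω) := ⟨Set.restrict _ v, hv.restrict⟩ with hνdef
    have hextν : ∀ s ∈ Icc t₀ (t₀ + a), ex ν s = v s := fun s hs => hexeq ν s hs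
    have hνfix : Tmap ν = ν := by
      ext x
      obtain ⟨t', ht'⟩ := x
      show Fop S' K' t₀ γ B u₀ tk Ck f b' (ex ν) t' = v t'
      rw [hE (ex ν) t' ht', hF (ex ν) v hextν t' ht']
      exact (hveq t' ht').symm
    have hνφ : ν = φ := hcontr.fixedPoint_unique hνfix
    calc v t = ν ⟨t, ht⟩ := rfl
      _ = φ ⟨t, ht⟩ := by rw [hνφ]
      _ = ex φ t := (hexeq φ t ht).symm
end

section
/- With the data of the nonlocal fractional evolution setup, let Ŝ_k := (1/Γ(1−γ)) ∫_{t₀}^{t_k} (t_k − s)^{−γ} S(s − t₀) ds (an operator-valued Bochner integral, so that Ŝ_k x = (I_{t₀⁺}^{1−γ} [s ↦ S(s−t₀)x])(t_k) for every x ∈ Ω), and assume that the bounded operator B is a two-sided inverse of I + Σ_{k=1}^p C_k Ŝ_k. Let G : J → Ω be continuous, set h(τ) := ∫_{t₀}^τ K(τ−s) G(s) ds, w := Σ_{k=1}^p C_k (I_{t₀⁺}^{1−γ} h)(t_k), x := B u₀ − B w, and define u(t) := S(t−t₀) x + ∫_{t₀}^t K(t−s) G(s) ds for t ∈ J. Then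 x + Σ_{k=1}^p C_k (I_{t₀⁺}^{1−γ} u)(t_k) = u₀; i.e., the function given by the mild-solution formula satisfies the nonlocal initial condition. -/
open Set intervalIntegral

open Filter Topology MeasureTheory in
/-- A uniformly bounded, strongly continuous family of operators is jointly continuous. -/
lemma joint_cont_of_strong {Ω : Type*} [NormedAddCommGroup Ω] [NormedSpace ℝ Ω]
    (T : ℝ → Ω →L[ℝ] Ω) (M : ℝ) (hb : ∀ t, ‖T t‖ ≤ M)
    (hc : ∀ y, Continuous fun t => T t y) :
    Continuous fun p : ℝ × Ω => T p.1 p.2 := by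
  rw [continuous_iff_continuousAt]
  rintro ⟨t, y⟩
  have h1 : Tendsto (fun p : ℝ × Ω => T p.1 (p.2 - y)) (𝓝 (t, y)) (𝓝 0) := by
    refine squeeze_zero_norm (a := fun p : ℝ × Ω => M * ‖p.2 - y‖) ?_ ?_
    · intro p
      exact (T p.1).le_of_opNorm_le (hb p.1) _
    · have hcont : Tendsto (fun p : ℝ × Ω => M * ‖p.2 - y‖) (𝓝 (t, y))
          (𝓝 (M * ‖y - y‖)) :=
        (continuous_const.mul (continuous_snd.sub continuous_const).norm).tendsto (t, y)
      simpa using hcont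
  have h2 : Tendsto (fun p : ℝ × Ω => T p.1 y) (𝓝 (t, y)) (𝓝 (T t y)) :=
    ((hc y).comp continuous_fst).tendsto (t, y)
  have h3 := h1.add h2
  rw [zero_add] at h3
  have heq : (fun p : ℝ × Ω => T p.1 (p.2 - y) + T p.1 y) =
      fun p : ℝ × Ω => T p.1 p.2 := by
    ext p; simp [map_sub]
  rwa [heq] at h3

open MeasureTheory in
/-- Interval integrability of `s ↦ (T-s)^(-γ) • g s` for `g` continuous, `γ < 1`. -/
lemma key_intervalIntegrable {Ω : Type*} [NormedAddCommGroup Ω] [NormedSpace ℝ Ω]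
    {γ t₀ T : ℝ} (hγ1 : γ < 1) (hT : t₀ ≤ T) {g : ℝ → Ω}
    (hg : ContinuousOn g (Icc t₀ T)) :
    IntervalIntegrable (fun s => ((T - s) ^ (1 - γ - 1) : ℝ) • g s) volume t₀ T := by
  have hpow : IntervalIntegrable (fun s : ℝ => (T - s) ^ (1 - γ - 1)) volume t₀ T := by
    have h0 : IntervalIntegrable (fun x : ℝ => x ^ (1 - γ - 1)) volume (T - t₀) 0 :=
      (intervalIntegral.intervalIntegrable_rpow' (by linarith)).symm
    have := h0.comp_sub_left T
    simpa using this
  rw [intervalIntegrable_iff_integrableOn_Ioc_of_le hT]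
  apply IntegrableOn.mono_set _ Ioc_subset_Icc_self
  apply IntegrableOn.smul_continuousOn _ hg isCompact_Icc
  rw [integrableOn_Icc_iff_integrableOn_Ioc]
  rw [intervalIntegrable_iff_integrableOn_Ioc_of_le hT] at hpow
  exact hpow

/-- The function given by the mild-solution formula satisfies the nonlocal initial
condition: with `Ŝ_k x = (I_{t₀⁺}^{1-γ}[s ↦ S(s-t₀) x])(t_k)`, `B` a two-sided inverse
of `I + ∑_k C_k Ŝ_k`, `h(τ) = ∫_{t₀}^τ K(τ-s) G(s) ds`,
`w = ∑_k C_k (I_{t₀⁺}^{1-γ} h)(t_k)`, `x = B u₀ - B w` and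
`u(t) = S(t-t₀) x + ∫_{t₀}^t K(t-s) G(s) ds`, one has
`x + ∑_k C_k (I_{t₀⁺}^{1-γ} u)(t_k) = u₀`. -/
theorem mild_formula_satisfies_nonlocal_condition {Ω : Type*} [NormedAddCommGroup Ω]
    [NormedSpace ℝ Ω] [CompleteSpace Ω] {p : ℕ}
    (t₀ a γ M : ℝ) (ht₀ : 0 ≤ t₀) (ha : 0 < a) (hγ0 : 0 ≤ γ) (hγ1 : γ < 1)
    (S K : ℝ → Ω →L[ℝ] Ω)
    (hScont : ∀ x : Ω, ContinuousOn (fun t => S t x) (Icc 0 a))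
    (hKcont : ∀ x : Ω, ContinuousOn (fun t => K t x) (Icc 0 a))
    (hSbd : ∀ t ∈ Icc (0 : ℝ) a, ‖S t‖ ≤ M)
    (hKbd : ∀ t ∈ Icc (0 : ℝ) a, ‖K t‖ ≤ M)
    (tk : Fin p → ℝ) (htk : StrictMono tk)
    (htkJ : ∀ k, tk k ∈ Icc t₀ (t₀ + a))
    (Ck : Fin p → ℝ) (hCk : ∀ k, Ck k ≠ 0)
    (B : Ω →L[ℝ] Ω) (u₀ : Ω)
    (Shat : Fin p → Ω →L[ℝ] Ω)
    (hShat : ∀ (k : Fin p) (x : Ω),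
      Shat k x = fracInt (1 - γ) t₀ (fun s => S (s - t₀) x) (tk k))
    (hB₁ : B.comp (ContinuousLinearMap.id ℝ Ω + ∑ k, Ck k • Shat k) =
      ContinuousLinearMap.id ℝ Ω)
    (hB₂ : (ContinuousLinearMap.id ℝ Ω + ∑ k, Ck k • Shat k).comp B =
      ContinuousLinearMap.id ℝ Ω)
    (G : ℝ → Ω) (hG : ContinuousOn G (Icc t₀ (t₀ + a)))
    (h : ℝ → Ω) (hh : ∀ τ, h τ = ∫ s in t₀..τ, (K (τ - s)) (G s))
    (w : Ω) (hw : w = ∑ k, Ck k • fracInt (1 - γ) t₀ h (tk k))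
    (x : Ω) (hx : x = B u₀ - B w)
    (u : ℝ → Ω) (hu : ∀ t, u t = S (t - t₀) x + ∫ s in t₀..t, (K (t - s)) (G s)) :
    x + ∑ k, Ck k • fracInt (1 - γ) t₀ u (tk k) = u₀ := by
  -- clamping maps
  set cK : ℝ → ℝ := fun t => min a (max 0 t) with hcK
  set cG : ℝ → ℝ := fun s => min (t₀ + a) (max t₀ s) with hcG
  have hcKmem : ∀ t, cK t ∈ Icc (0 : ℝ) a := fun t =>
    ⟨le_min ha.le (le_max_left _ _), min_le_left _ _⟩
  have hcGmem : ∀ s, cG s ∈ Icc t₀ (t₀ + a) := fun s =>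
    ⟨le_min (by linarith) (le_max_left _ _), min_le_left _ _⟩
  have hcKcont : Continuous cK := continuous_const.min (continuous_const.max continuous_id)
  have hcGcont : Continuous cG := continuous_const.min (continuous_const.max continuous_id)
  have hcKid : ∀ t ∈ Icc (0 : ℝ) a, cK t = t := by
    intro t ht; simp [hcK, max_eq_right ht.1, min_eq_right ht.2]
  have hcGid : ∀ s ∈ Icc t₀ (t₀ + a), cG s = s := by
    intro s hs; simp [hcG, max_eq_right hs.1, min_eq_right hs.2]
  -- extended operator family and extended data
  set T : ℝ → Ω →L[ℝ] Ω := fun t => K (cK t) with hT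
  have hTbd : ∀ t, ‖T t‖ ≤ M := fun t => hKbd _ (hcKmem t)
  have hTc : ∀ y : Ω, Continuous fun t => T t y := fun y =>
    (hKcont y).comp_continuous hcKcont hcKmem
  have hTjoint : Continuous fun p : ℝ × Ω => T p.1 p.2 :=
    joint_cont_of_strong T M hTbd hTc
  set G' : ℝ → Ω := fun s => G (cG s) with hG'
  have hG'c : Continuous G' := hG.comp_continuous hcGcont hcGmem
  -- continuity of h on Icc t₀ (t₀+a)
  have hhc : ContinuousOn h (Icc t₀ (t₀ + a)) := by
    have hFcont : Continuous (Function.uncurry fun τ s : ℝ => T (τ - s) (G' s)) := by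
      show Continuous fun q : ℝ × ℝ => T (q.1 - q.2) (G' q.2)
      exact hTjoint.comp
        ((continuous_fst.sub continuous_snd).prodMk (hG'c.comp continuous_snd))
    have hmain : Continuous fun τ => ∫ s in t₀..τ, T (τ - s) (G' s) :=
      intervalIntegral.continuous_parametric_intervalIntegral_of_continuous
        hFcont continuous_id
    apply hmain.continuousOn.congr
    intro τ hτ
    rw [hh τ]
    apply intervalIntegral.integral_congr
    intro s hs
    rw [uIcc_of_le hτ.1] at hs
    have hs1 : s ∈ Icc t₀ (t₀ + a) := ⟨hs.1, le_trans hs.2 hτ.2⟩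
    have hts : τ - s ∈ Icc (0 : ℝ) a := ⟨by linarith [hs.2], by
      have := hτ.2; have := hs.1; linarith⟩
    simp only [hT, hG', hcKid _ hts, hcGid _ hs1]
  -- per-k decomposition of the fractional integral of u
  have hdecomp : ∀ k : Fin p, fracInt (1 - γ) t₀ u (tk k) =
      Shat k x + fracInt (1 - γ) t₀ h (tk k) := by
    intro k
    have hk1 : t₀ ≤ tk k := (htkJ k).1
    have hk2 : tk k ≤ t₀ + a := (htkJ k).2
    have hSc : ContinuousOn (fun s => S (s - t₀) x) (Icc t₀ (tk k)) := by
      apply (hScont x).comp ((continuous_id.sub continuous_const).continuousOn)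
      intro s hs
      simp only [mem_Icc, Pi.sub_apply, id_eq]
      exact ⟨by linarith [hs.1], by linarith [hs.2]⟩
    have i1 : IntervalIntegrable
        (fun s => ((tk k - s) ^ (1 - γ - 1) : ℝ) • S (s - t₀) x) MeasureTheory.volume t₀ (tk k) :=
      key_intervalIntegrable hγ1 hk1 hSc
    have i2 : IntervalIntegrable
        (fun s => ((tk k - s) ^ (1 - γ - 1) : ℝ) • h s) MeasureTheory.volume t₀ (tk k) :=
      key_intervalIntegrable hγ1 hk1 (hhc.mono (Icc_subset_Icc le_rfl hk2))
    have husum : ∀ s : ℝ, u s = S (s - t₀) x + h s := by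
      intro s; rw [hu s, hh s]
    have hint_eq : (∫ s in t₀..tk k, ((tk k - s) ^ (1 - γ - 1) : ℝ) • u s) =
        (∫ s in t₀..tk k, ((tk k - s) ^ (1 - γ - 1) : ℝ) • S (s - t₀) x) +
        (∫ s in t₀..tk k, ((tk k - s) ^ (1 - γ - 1) : ℝ) • h s) := by
      rw [← intervalIntegral.integral_add i1 i2]
      apply intervalIntegral.integral_congr
      intro s _
      simp only [husum, smul_add]
    rw [hShat k x]
    simp only [fracInt]
    rw [hint_eq, smul_add]
  -- sum up
  have hsum : ∑ k, Ck k • fracInt (1 - γ) t₀ u (tk k) =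
      (∑ k, Ck k • Shat k) x + w := by
    rw [hw, ContinuousLinearMap.sum_apply, ← Finset.sum_add_distrib]
    apply Finset.sum_congr rfl
    intro k _
    rw [hdecomp k, smul_add, ContinuousLinearMap.smul_apply]
  rw [hsum, ← add_assoc]
  have hxw : x = B (u₀ - w) := by rw [hx, map_sub]
  have := congrArg (fun f : Ω →L[ℝ] Ω => f (u₀ - w)) hB₂
  simp only [ContinuousLinearMap.coe_comp', Function.comp_apply,
    ContinuousLinearMap.add_apply, ContinuousLinearMap.coe_id', id_eq] at this
  rw [hxw, this]
  abel
end

section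
/- With the data of the nonlocal fractional evolution setup, let Ŝ_k := (1/Γ(1−γ)) ∫_{t₀}^{t_k} (t_k − s)^{−γ} S(s − t₀) ds, and assume the bounded operator B is a two-sided inverse of I + Σ_{k=1}^p C_k Ŝ_k. Suppose u : J → Ω is continuous and there exists x ∈ Ω with u(t) = S(t−t₀) x + ∫_{t₀}^t K(t−s) f(s,u(s),u(b₁(s)),…,u(b_r(s))) ds for all t ∈ J, and that u satisfies the nonlocal condition x + Σ_{k=1}^p C_k (I_{t₀⁺}^{1−γ} u)(t_k) = u₀. Then x = B u₀ − B Σ_{k=1}^p C_k (I_{t₀⁺}^{1−γ} h_u)(t_k), where h_u(τ) := ∫_{t₀}^τ K(τ−s) f(s,u(s),u(b₁(s)),…,u(b_r(s))) ds; consequently u satisfies the mild-solution integral equation u(t) = S(t−t₀)Bu₀ + ∫_{t₀}^t K(t−s) f(s,u(s),u(b₁(s)),…,u(b_r(s))) ds − S(t−t₀) B Σ_{k=1}^p C_k (I_{t₀⁺}^{1−γ} h_u)(t_k) for all t ∈ J, i.e., every classical solution (represented by the variation-of-constants formula) is a mild solution. -/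
open Set intervalIntegral

open MeasureTheory in
lemma pow_intervalIntegrable {γ t₀ T : ℝ} (hγ : γ < 1) :
    IntervalIntegrable (fun s => (T - s) ^ ((1 - γ) - 1)) volume t₀ T := by
  have h : -1 < (1 - γ) - 1 := by linarith
  have := (intervalIntegrable_rpow' (a := 0) (b := T - t₀) h).comp_sub_left T
  simpa using this.symm

open MeasureTheory in
lemma smul_intervalIntegrable {Ω : Type*} [NormedAddCommGroup Ω] [NormedSpace ℝ Ω]
    {γ t₀ T : ℝ} (hγ : γ < 1) (hle : t₀ ≤ T) {g : ℝ → Ω}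
    (hg : ContinuousOn g (Icc t₀ T)) :
    IntervalIntegrable (fun s => ((T - s) ^ ((1 - γ) - 1)) • g s) volume t₀ T := by
  rw [intervalIntegrable_iff_integrableOn_Ioc_of_le hle]
  have hφ : IntegrableOn (fun s => (T - s) ^ ((1 - γ) - 1)) (Ioc t₀ T) volume :=
    (intervalIntegrable_iff_integrableOn_Ioc_of_le hle).mp (pow_intervalIntegrable hγ)
  have hgm : AEStronglyMeasurable g (volume.restrict (Ioc t₀ T)) :=
    (hg.mono Ioc_subset_Icc_self).aestronglyMeasurable measurableSet_Ioc
  obtain ⟨C, hC⟩ : ∃ C, ∀ s ∈ Icc t₀ T, ‖g s‖ ≤ C := by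
    rcases (isCompact_Icc.image_of_continuousOn (hg.norm)).bddAbove with ⟨C, hC⟩
    exact ⟨C, fun s hs => hC ⟨s, hs, rfl⟩⟩
  have hmem : MemLp g ⊤ (volume.restrict (Ioc t₀ T)) := by
    refine memLp_top_of_bound hgm C ?_
    filter_upwards [ae_restrict_mem measurableSet_Ioc] with s hs
    exact hC s (Ioc_subset_Icc_self hs)
  exact hφ.smul_of_top_left hmem

/-- Every classical solution (represented by the variation-of-constants formula with the
nonlocal condition) is a mild solution: if `u` is continuous on `J`, satisfies
`u(t) = S(t-t₀) x + ∫_{t₀}^t K(t-s) f(s, u(s), u(b₁(s)), …, u(b_r(s))) ds` on `J` and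
the nonlocal condition `x + ∑_k C_k (I_{t₀⁺}^{1-γ} u)(t_k) = u₀`, where `B` is a
two-sided inverse of `I + ∑_k C_k Ŝ_k` and
`Ŝ_k x = (I_{t₀⁺}^{1-γ}[s ↦ S(s-t₀) x])(t_k)`, then
`x = B u₀ - B ∑_k C_k (I_{t₀⁺}^{1-γ} h_u)(t_k)` and consequently `u` satisfies the
mild-solution integral equation on `J`. -/
theorem classical_solution_is_mild {Ω : Type*} [NormedAddCommGroup Ω] [NormedSpace ℝ Ω]
    [CompleteSpace Ω] {r p : ℕ}
    (t₀ a γ M : ℝ) (ht₀ : 0 ≤ t₀) (ha : 0 < a) (hγ0 : 0 ≤ γ) (hγ1 : γ < 1)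
    (S K : ℝ → Ω →L[ℝ] Ω)
    (hScont : ∀ x : Ω, ContinuousOn (fun t => S t x) (Icc 0 a))
    (hKcont : ∀ x : Ω, ContinuousOn (fun t => K t x) (Icc 0 a))
    (hSbd : ∀ t ∈ Icc (0 : ℝ) a, ‖S t‖ ≤ M)
    (hKbd : ∀ t ∈ Icc (0 : ℝ) a, ‖K t‖ ≤ M)
    (tk : Fin p → ℝ) (htk : StrictMono tk)
    (htkJ : ∀ k, tk k ∈ Icc t₀ (t₀ + a))
    (Ck : Fin p → ℝ) (hCk : ∀ k, Ck k ≠ 0)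
    (B : Ω →L[ℝ] Ω) (u₀ : Ω)
    (b : Fin r → ℝ → ℝ)
    (hbcont : ∀ i, ContinuousOn (b i) (Icc t₀ (t₀ + a)))
    (hbmaps : ∀ i, MapsTo (b i) (Icc t₀ (t₀ + a)) (Icc t₀ (t₀ + a)))
    (f : ℝ → (Fin (r + 1) → Ω) → Ω)
    (hfcont : Continuous fun q : ℝ × (Fin (r + 1) → Ω) => f q.1 q.2)
    (Shat : Fin p → Ω →L[ℝ] Ω)
    (hShat : ∀ (k : Fin p) (x : Ω),
      Shat k x = fracInt (1 - γ) t₀ (fun s => S (s - t₀) x) (tk k))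
    (hB₁ : B.comp (ContinuousLinearMap.id ℝ Ω + ∑ k, Ck k • Shat k) =
      ContinuousLinearMap.id ℝ Ω)
    (hB₂ : (ContinuousLinearMap.id ℝ Ω + ∑ k, Ck k • Shat k).comp B =
      ContinuousLinearMap.id ℝ Ω)
    (u : ℝ → Ω) (hucont : ContinuousOn u (Icc t₀ (t₀ + a)))
    (x : Ω)
    (hu : ∀ t ∈ Icc t₀ (t₀ + a), u t = S (t - t₀) x + convMap K t₀ f b u t)
    (hnonlocal : x + ∑ k, Ck k • fracInt (1 - γ) t₀ u (tk k) = u₀) :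
    x = B u₀ - B (∑ k, Ck k • fracInt (1 - γ) t₀ (convMap K t₀ f b u) (tk k)) ∧
    ∀ t ∈ Icc t₀ (t₀ + a), u t = Fop S K t₀ γ B u₀ tk Ck f b u t := by
  set h := convMap K t₀ f b u with hh
  set g₁ : ℝ → Ω := fun s => S (s - t₀) x with hg₁
  -- continuity of g₁ on J
  have hg₁cont : ContinuousOn g₁ (Icc t₀ (t₀ + a)) := by
    have : ContinuousOn (fun s : ℝ => s - t₀) (Icc t₀ (t₀ + a)) :=
      (continuous_id.sub continuous_const).continuousOn
    refine (hScont x).comp this ?_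
    intro s hs
    show s - t₀ ∈ Icc 0 a
    exact ⟨by linarith [hs.1], by linarith [hs.2]⟩
  -- continuity of h on J
  have hhcont : ContinuousOn h (Icc t₀ (t₀ + a)) := by
    refine (hucont.sub hg₁cont).congr ?_
    intro s hs
    have := hu s hs
    simp only [hg₁]
    show h s = u s - S (s - t₀) x
    rw [this]; abel
  -- key identity for each k
  have hkey : ∀ k : Fin p,
      fracInt (1 - γ) t₀ u (tk k) = Shat k x + fracInt (1 - γ) t₀ h (tk k) := by
    intro k
    obtain ⟨hk1, hk2⟩ := htkJ k
    have hsub : Icc t₀ (tk k) ⊆ Icc t₀ (t₀ + a) := Icc_subset_Icc le_rfl hk2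
    have hint1 : IntervalIntegrable
        (fun s => ((tk k - s) ^ ((1 - γ) - 1)) • g₁ s) MeasureTheory.volume t₀ (tk k) :=
      smul_intervalIntegrable hγ1 hk1 (hg₁cont.mono hsub)
    have hint2 : IntervalIntegrable
        (fun s => ((tk k - s) ^ ((1 - γ) - 1)) • h s) MeasureTheory.volume t₀ (tk k) :=
      smul_intervalIntegrable hγ1 hk1 (hhcont.mono hsub)
    have hcongr : (∫ s in t₀..tk k, ((tk k - s) ^ ((1 - γ) - 1)) • u s) =
        ∫ s in t₀..tk k, (((tk k - s) ^ ((1 - γ) - 1)) • g₁ s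
          + ((tk k - s) ^ ((1 - γ) - 1)) • h s) := by
      refine intervalIntegral.integral_congr ?_
      intro s hs
      rw [uIcc_of_le hk1] at hs
      show _ = _
      dsimp only
      rw [← smul_add, ← hu s (hsub hs)]
    rw [hShat]
    simp only [fracInt]
    rw [hcongr, intervalIntegral.integral_add hint1 hint2, smul_add]
  -- the sum identity
  have hsum : ∑ k, Ck k • fracInt (1 - γ) t₀ u (tk k) =
      (∑ k, Ck k • Shat k) x + ∑ k, Ck k • fracInt (1 - γ) t₀ h (tk k) := by
    simp only [hkey, smul_add, Finset.sum_add_distrib]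
    congr 1
    simp [ContinuousLinearMap.sum_apply]
  set R := ∑ k, Ck k • fracInt (1 - γ) t₀ h (tk k) with hR
  have hIx : (ContinuousLinearMap.id ℝ Ω + ∑ k, Ck k • Shat k) x = u₀ - R := by
    simp only [ContinuousLinearMap.add_apply, ContinuousLinearMap.id_apply]
    rw [hsum] at hnonlocal
    have := hnonlocal
    rw [← this]; abel
  have hx : x = B u₀ - B R := by
    have : B ((ContinuousLinearMap.id ℝ Ω + ∑ k, Ck k • Shat k) x) = x := by
      have := congrArg (fun T => T x) hB₁
      simpa using this
    rw [hIx] at this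
    rw [← this, map_sub]
  refine ⟨hx, fun t ht => ?_⟩
  have := hu t ht
  rw [this, hx]
  simp only [Fop, map_sub, ← hh, ← hR]
  abel
end

section
/- With the data of the nonlocal fractional evolution setup, assume in addition that ‖S(t) − S(τ)‖ ≤ ℓ|t − τ| for all t, τ ∈ [0,a], that f satisfies ‖f(s,z₀,…,z_r) − f(s̄,z̄₀,…,z̄_r)‖ ≤ C(|s − s̄| + Σ_{i=0}^r ‖z_i − z̄_i‖), and that u : J → Ω is a continuous solution of the mild-solution integral equation for which there exists k > 0 with ‖u(b_i(s)) − u(b_i(s̄))‖ ≤ k‖u(s) − u(s̄)‖ for all i = 1,…,r and s, s̄ ∈ J. Set N := max_{s∈J} ‖f(s,u(s),u(b₁(s)),…,u(b_r(s)))‖ and δ̃ := ℓ‖Bu₀‖ + ℓ‖B‖·C̃·M·N·a·Σ_{k=1}^p |C_k| + MN + MCa, where C̃ = a^{1−γ}/Γ(2−γ). Then for all t and h > 0 with t, t+h ∈ J: ‖u(t+h) − u(t)‖ ≤ δ̃·h + MC(1 + rk) ∫_{t₀}^t ‖u(s+h) − u(s)‖ ds. -/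
open Set intervalIntegral

open MeasureTheory

/-- Joint continuity of `s ↦ K (c - s) (e s)` from strong continuity and boundedness. -/
lemma aux_contOn_K {Ω : Type*} [NormedAddCommGroup Ω] [NormedSpace ℝ Ω]
    (K : ℝ → Ω →L[ℝ] Ω) (a M : ℝ)
    (hKcont : ∀ x : Ω, ContinuousOn (fun t => K t x) (Icc 0 a))
    (hKbd : ∀ t ∈ Icc (0 : ℝ) a, ‖K t‖ ≤ M)
    {I : Set ℝ} (c : ℝ) (hmap : ∀ s ∈ I, c - s ∈ Icc (0 : ℝ) a)
    {e : ℝ → Ω} (he : ContinuousOn e I) :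
    ContinuousOn (fun s => K (c - s) (e s)) I := by
  intro s₀ hs₀
  have hinner : ContinuousWithinAt (fun s : ℝ => c - s) I s₀ :=
    (continuous_const.sub continuous_id).continuousWithinAt
  have h1 : ContinuousWithinAt (fun s => K (c - s) (e s₀)) I s₀ :=
    ContinuousWithinAt.comp (hKcont (e s₀) (c - s₀) (hmap s₀ hs₀)) hinner
      (fun s hs => hmap s hs)
  have h2 : Filter.Tendsto (fun s => K (c - s) (e s) - K (c - s) (e s₀))
      (nhdsWithin s₀ I) (nhds 0) := by
    have hev : ∀ᶠ s in nhdsWithin s₀ I,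
        ‖K (c - s) (e s) - K (c - s) (e s₀)‖ ≤ M * ‖e s - e s₀‖ := by
      filter_upwards [self_mem_nhdsWithin] with s hs
      have heq : K (c - s) (e s) - K (c - s) (e s₀) = K (c - s) (e s - e s₀) := by
        rw [map_sub]
      rw [heq]
      exact le_trans ((K (c - s)).le_opNorm _)
        (mul_le_mul_of_nonneg_right (hKbd _ (hmap s hs)) (norm_nonneg _))
    have ht : Filter.Tendsto (fun s => M * ‖e s - e s₀‖) (nhdsWithin s₀ I) (nhds 0) := by
      have : Filter.Tendsto (fun s => e s - e s₀) (nhdsWithin s₀ I) (nhds 0) := by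
        simpa using Filter.Tendsto.sub (he s₀ hs₀) (tendsto_const_nhds (x := e s₀))
      simpa using (this.norm.const_mul M)
    exact squeeze_zero_norm' hev ht
  have := h2.add h1
  simp only [sub_add_cancel, zero_add] at this
  exact this

set_option maxHeartbeats 1000000 in
/-- Increment estimate for the mild solution: under the stated Lipschitz assumptions on
`S`, `f` and `u ∘ bᵢ`, with `N = max_{s ∈ J} ‖f(s, u(s), u(b₁(s)), …, u(b_r(s)))‖` and
`δ̃ = ℓ‖B u₀‖ + ℓ‖B‖ C̃ M N a ∑_k |C_k| + M N + M C a` (`C̃ = a^(1-γ)/Γ(2-γ)`), every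
continuous mild solution `u` satisfies, for all `t` and `h > 0` with `t, t + h ∈ J`,
`‖u(t+h) - u(t)‖ ≤ δ̃ h + M C (1 + r k) ∫_{t₀}^t ‖u(s+h) - u(s)‖ ds`. -/
theorem mild_solution_increment_estimate {Ω : Type*} [NormedAddCommGroup Ω]
    [NormedSpace ℝ Ω] [CompleteSpace Ω] {r p : ℕ}
    (t₀ a γ M C ℓ kc N δ' : ℝ) (ht₀ : 0 ≤ t₀) (ha : 0 < a) (hγ0 : 0 ≤ γ) (hγ1 : γ < 1)
    (S K : ℝ → Ω →L[ℝ] Ω)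
    (hScont : ∀ x : Ω, ContinuousOn (fun t => S t x) (Icc 0 a))
    (hKcont : ∀ x : Ω, ContinuousOn (fun t => K t x) (Icc 0 a))
    (hSbd : ∀ t ∈ Icc (0 : ℝ) a, ‖S t‖ ≤ M)
    (hKbd : ∀ t ∈ Icc (0 : ℝ) a, ‖K t‖ ≤ M)
    (hSlip : ∀ t ∈ Icc (0 : ℝ) a, ∀ τ ∈ Icc (0 : ℝ) a, ‖S t - S τ‖ ≤ ℓ * |t - τ|)
    (tk : Fin p → ℝ) (htk : StrictMono tk)
    (htkJ : ∀ k, tk k ∈ Icc t₀ (t₀ + a))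
    (Ck : Fin p → ℝ) (hCk : ∀ k, Ck k ≠ 0)
    (B : Ω →L[ℝ] Ω) (u₀ : Ω)
    (b : Fin r → ℝ → ℝ)
    (hbcont : ∀ i, ContinuousOn (b i) (Icc t₀ (t₀ + a)))
    (hbmaps : ∀ i, MapsTo (b i) (Icc t₀ (t₀ + a)) (Icc t₀ (t₀ + a)))
    (f : ℝ → (Fin (r + 1) → Ω) → Ω)
    (hfcont : Continuous fun q : ℝ × (Fin (r + 1) → Ω) => f q.1 q.2)
    (hfLip : ∀ s ∈ Icc t₀ (t₀ + a), ∀ s' ∈ Icc t₀ (t₀ + a),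
      ∀ z zp : Fin (r + 1) → Ω,
      ‖f s z - f s' zp‖ ≤ C * (|s - s'| + ∑ i, ‖z i - zp i‖))
    (u : ℝ → Ω) (hucont : ContinuousOn u (Icc t₀ (t₀ + a)))
    (humild : ∀ t ∈ Icc t₀ (t₀ + a), u t = Fop S K t₀ γ B u₀ tk Ck f b u t)
    (hkc : 0 < kc)
    (hub : ∀ (i : Fin r), ∀ s ∈ Icc t₀ (t₀ + a), ∀ s' ∈ Icc t₀ (t₀ + a),
      ‖u (b i s) - u (b i s')‖ ≤ kc * ‖u s - u s'‖)
    (hN : N = ⨆ s : Icc t₀ (t₀ + a), ‖f s (fArgs b u s)‖)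
    (hδ' : δ' = ℓ * ‖B u₀‖ +
      ℓ * ‖B‖ * (a ^ (1 - γ) / Real.Gamma (2 - γ)) * M * N * a * (∑ k, |Ck k|) +
      M * N + M * C * a) :
    ∀ t ∈ Icc t₀ (t₀ + a), ∀ h : ℝ, 0 < h → t + h ∈ Icc t₀ (t₀ + a) →
      ‖u (t + h) - u t‖ ≤ δ' * h +
        M * C * (1 + (r : ℝ) * kc) * ∫ s in t₀..t, ‖u (s + h) - u s‖ := by
  classical
  set J : Set ℝ := Icc t₀ (t₀ + a) with hJ
  set g : ℝ → Ω := fun s => f s (fArgs b u s) with hg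
  have hg' : ∀ s, f s (fArgs b u s) = g s := fun s => rfl
  have h1γ : (0 : ℝ) < 1 - γ := by linarith
  have hM0 : 0 ≤ M := le_trans (norm_nonneg _) (hSbd 0 ⟨le_rfl, ha.le⟩)
  have hℓ0 : 0 ≤ ℓ := by
    have hsl := hSlip 0 ⟨le_rfl, ha.le⟩ a ⟨ha.le, le_rfl⟩
    rw [show |(0:ℝ) - a| = a by rw [abs_of_nonpos (by linarith)]; ring] at hsl
    nlinarith [norm_nonneg (S 0 - S a)]
  have hC0 : 0 ≤ C := by
    have hfl := hfLip t₀ ⟨le_rfl, by linarith⟩ (t₀ + a) ⟨by linarith, le_rfl⟩ 0 0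
    simp only [Pi.zero_apply, sub_self, norm_zero, Finset.sum_const, smul_zero,
      add_zero, Finset.card_univ, smul_eq_mul, mul_zero] at hfl
    rw [show |t₀ - (t₀ + a)| = a by rw [abs_of_nonpos (by linarith)]; ring] at hfl
    nlinarith [norm_nonneg (f t₀ 0 - f (t₀ + a) 0)]
  -- continuity of `g` on `J`
  have hargs : ContinuousOn (fun s => fArgs b u s) J := by
    apply continuousOn_pi.mpr
    intro i
    induction i using Fin.cases with
    | zero => simpa [fArgs] using hucont
    | succ j => simpa [fArgs, Function.comp_def] using (hucont.comp (hbcont j) (hbmaps j))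
  have hgcont : ContinuousOn g J :=
    by have := hfcont.comp_continuousOn (continuousOn_id.prodMk hargs); exact this
  -- bound on `g`
  have hgbd : ∀ s ∈ J, ‖g s‖ ≤ N := by
    intro s hs
    have hJc : IsCompact J := hJ ▸ isCompact_Icc
    have hbdd : BddAbove (Set.range fun s : J => ‖g ↑s‖) := by
      have hb2 := (hJc.image_of_continuousOn hgcont.norm).bddAbove
      rwa [Set.image_eq_range] at hb2
    rw [hN]
    exact le_ciSup hbdd ⟨s, hs⟩
  have hN0 : 0 ≤ N := le_trans (norm_nonneg _) (hgbd t₀ ⟨le_rfl, by linarith⟩)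
  -- bound on `convMap`
  have hconvbd : ∀ s ∈ J, ‖convMap K t₀ f b u s‖ ≤ M * N * a := by
    intro s hs
    obtain ⟨hs1, hs2⟩ := hs
    have hb1 : ‖convMap K t₀ f b u s‖ ≤ M * N * |s - t₀| := by
      apply intervalIntegral.norm_integral_le_of_norm_le_const
      intro x hx
      rw [Set.uIoc_of_le hs1] at hx
      have hmem : s - x ∈ Icc (0:ℝ) a := ⟨by linarith [hx.2], by linarith [hx.1]⟩
      calc ‖(K (s - x)) (f x (fArgs b u x))‖ ≤ ‖K (s - x)‖ * ‖g x‖ := by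
            rw [hg']; exact (K (s - x)).le_opNorm _
        _ ≤ M * N := mul_le_mul (hKbd _ hmem)
            (hgbd x ⟨hx.1.le, by linarith [hx.2]⟩) (norm_nonneg _) hM0
    refine hb1.trans ?_
    rw [abs_of_nonneg (by linarith : (0:ℝ) ≤ s - t₀)]
    nlinarith [mul_nonneg hM0 hN0]
  -- bound on the fractional integrals
  have hΓpos : 0 < Real.Gamma (1 - γ) := Real.Gamma_pos_of_pos h1γ
  have hfrac : ∀ k, ‖fracInt (1 - γ) t₀ (convMap K t₀ f b u) (tk k)‖ ≤
      (a ^ (1 - γ) / Real.Gamma (2 - γ)) * (M * N * a) := by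
    intro k
    obtain ⟨hT1, hT2⟩ := htkJ k
    set T := tk k with hT
    unfold fracInt
    rw [norm_smul, show (1 - γ) - 1 = -γ by ring]
    have hbound_int : IntervalIntegrable (fun s => (T - s) ^ (-γ) * (M * N * a))
        volume t₀ T := by
      have h0 : IntervalIntegrable (fun x : ℝ => x ^ (-γ)) volume 0 (T - t₀) :=
        intervalIntegrable_rpow' (by linarith)
      have h1 := h0.comp_sub_left T
      rw [sub_zero, sub_sub_cancel] at h1
      exact h1.symm.mul_const _
    have hstep : ‖∫ s in t₀..T, ((T - s) ^ (-γ)) • (convMap K t₀ f b u s)‖ ≤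
        |∫ s in t₀..T, (T - s) ^ (-γ) * (M * N * a)| := by
      refine le_trans (intervalIntegral.norm_integral_le_of_norm_le hT1 ?_ hbound_int) (le_abs_self _)
      apply Filter.Eventually.of_forall
      intro s hs
      have hrp : (0:ℝ) ≤ (T - s) ^ (-γ) := Real.rpow_nonneg (by linarith [hs.2]) _
      rw [norm_smul, Real.norm_eq_abs, abs_of_nonneg hrp]
      exact mul_le_mul_of_nonneg_left
        (hconvbd s ⟨hs.1.le, by linarith [hs.2]⟩) hrp
    have hval : ∫ s in t₀..T, (T - s) ^ (-γ) * (M * N * a) =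
        ((T - t₀) ^ (1 - γ) / (1 - γ)) * (M * N * a) := by
      rw [intervalIntegral.integral_mul_const]
      congr 1
      rw [intervalIntegral.integral_comp_sub_left (fun x => x ^ (-γ)) T, sub_self,
        integral_rpow (Or.inl (by linarith)),
        Real.zero_rpow (by intro hc; nlinarith : -γ + 1 ≠ 0),
        show -γ + 1 = 1 - γ by ring]
      ring
    have hMNa : 0 ≤ M * N * a := by positivity
    have hpow : (T - t₀) ^ (1 - γ) ≤ a ^ (1 - γ) :=
      Real.rpow_le_rpow (by linarith) (by linarith) h1γ.le
    have hΓ2 : Real.Gamma (2 - γ) = (1 - γ) * Real.Gamma (1 - γ) := by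
      rw [show (2:ℝ) - γ = (1 - γ) + 1 by ring, Real.Gamma_add_one (ne_of_gt h1γ)]
    have hTpow : (0:ℝ) ≤ (T - t₀) ^ (1 - γ) := Real.rpow_nonneg (by linarith) _
    have habs : |((T - t₀) ^ (1 - γ) / (1 - γ)) * (M * N * a)| =
        ((T - t₀) ^ (1 - γ) / (1 - γ)) * (M * N * a) := by
      apply abs_of_nonneg
      positivity
    calc ‖1 / Real.Gamma (1 - γ)‖ *
          ‖∫ s in t₀..T, ((T - s) ^ (-γ)) • (convMap K t₀ f b u s)‖
        ≤ (1 / Real.Gamma (1 - γ)) * (((T - t₀) ^ (1 - γ) / (1 - γ)) * (M * N * a)) := by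
          rw [Real.norm_eq_abs, abs_of_nonneg (by positivity)]
          refine mul_le_mul_of_nonneg_left ?_ (by positivity)
          rw [← habs, ← hval]
          exact hstep
      _ = (T - t₀) ^ (1 - γ) * ((M * N * a) / ((1 - γ) * Real.Gamma (1 - γ))) := by
          rw [mul_comm (1 - γ) (Real.Gamma (1 - γ)), ← div_div]
          ring
      _ ≤ a ^ (1 - γ) * ((M * N * a) / ((1 - γ) * Real.Gamma (1 - γ))) :=
          mul_le_mul_of_nonneg_right hpow (by positivity)
      _ = a ^ (1 - γ) / Real.Gamma (2 - γ) * (M * N * a) := by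
          rw [hΓ2]; ring
  -- main estimate
  intro t ht h hh hth
  have ht' := ht
  have hth' := hth
  simp only [hJ, mem_Icc] at ht' hth'
  have hha : h ≤ a := by linarith [ht'.1, hth'.2]
  have hta : t - t₀ ∈ Icc (0:ℝ) a := ⟨by linarith [ht'.1], by linarith [ht'.2]⟩
  have htha : t + h - t₀ ∈ Icc (0:ℝ) a := ⟨by linarith [hth'.1], by linarith [hth'.2]⟩
  set w : Ω := ∑ k, Ck k • fracInt (1 - γ) t₀ (convMap K t₀ f b u) (tk k) with hw
  have key : u (t + h) - u t =
      (S (t + h - t₀) - S (t - t₀)) (B u₀)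
      + (convMap K t₀ f b u (t + h) - convMap K t₀ f b u t)
      - (S (t + h - t₀) - S (t - t₀)) (B w) := by
    rw [humild (t + h) hth, humild t ht]
    simp only [Fop, ContinuousLinearMap.sub_apply, hw]
    abel
  have hΔS : ‖S (t + h - t₀) - S (t - t₀)‖ ≤ ℓ * h := by
    have hsl := hSlip (t + h - t₀) htha (t - t₀) hta
    rwa [show t + h - t₀ - (t - t₀) = h by ring, abs_of_pos hh] at hsl
  have hP1 : ‖(S (t + h - t₀) - S (t - t₀)) (B u₀)‖ ≤ ℓ * h * ‖B u₀‖ :=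
    le_trans ((S (t + h - t₀) - S (t - t₀)).le_opNorm _)
      (mul_le_mul_of_nonneg_right hΔS (norm_nonneg _))
  have hwbd : ‖w‖ ≤ (∑ k, |Ck k|) * ((a ^ (1 - γ) / Real.Gamma (2 - γ)) * (M * N * a)) := by
    rw [hw, Finset.sum_mul]
    refine le_trans (norm_sum_le _ _) (Finset.sum_le_sum fun k _ => ?_)
    rw [norm_smul, Real.norm_eq_abs]
    exact mul_le_mul_of_nonneg_left (hfrac k) (abs_nonneg _)
  have hP3 : ‖(S (t + h - t₀) - S (t - t₀)) (B w)‖ ≤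
      ℓ * h * (‖B‖ * ((∑ k, |Ck k|) * ((a ^ (1 - γ) / Real.Gamma (2 - γ)) * (M * N * a)))) := by
    refine le_trans ((S (t + h - t₀) - S (t - t₀)).le_opNorm _) ?_
    refine mul_le_mul hΔS ?_ (norm_nonneg _) (by positivity)
    exact le_trans (B.le_opNorm _) (mul_le_mul_of_nonneg_left hwbd (norm_nonneg _))
  -- continuity/integrability on the relevant intervals
  have hgshift : ContinuousOn (fun σ => g (σ + h)) (Icc (t₀ - h) t) := by
    refine hgcont.comp (continuous_add_right h).continuousOn ?_
    intro σ hσ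
    simp only [mem_Icc] at hσ
    simp only [hJ, mem_Icc]
    constructor <;> linarith [hσ.1, hσ.2, hth'.2]
  have hcontF : ContinuousOn (fun σ => K (t - σ) (g (σ + h))) (Icc (t₀ - h) t) := by
    refine aux_contOn_K K a M hKcont hKbd t ?_ hgshift
    intro σ hσ
    simp only [mem_Icc] at hσ ⊢
    constructor <;> linarith [hσ.1, hσ.2, hth'.2, ht'.1]
  have hcontG : ContinuousOn (fun σ => K (t - σ) (g σ)) (Icc t₀ t) := by
    refine aux_contOn_K K a M hKcont hKbd t ?_ (hgcont.mono ?_)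
    · intro σ hσ
      simp only [mem_Icc] at hσ ⊢
      constructor <;> linarith [hσ.1, hσ.2, ht'.2, ht'.1]
    · intro σ hσ
      simp only [mem_Icc] at hσ
      simp only [hJ, mem_Icc]
      exact ⟨hσ.1, by linarith [hσ.2, ht'.2]⟩
  have I1 : IntervalIntegrable (fun σ => K (t - σ) (g (σ + h))) volume (t₀ - h) t₀ := by
    apply ContinuousOn.intervalIntegrable
    rw [Set.uIcc_of_le (by linarith : t₀ - h ≤ t₀)]
    refine hcontF.mono ?_
    intro x hx; simp only [mem_Icc] at hx ⊢; exact ⟨hx.1, by linarith [hx.2, ht'.1]⟩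
  have I2 : IntervalIntegrable (fun σ => K (t - σ) (g (σ + h))) volume t₀ t := by
    apply ContinuousOn.intervalIntegrable
    rw [Set.uIcc_of_le ht'.1]
    refine hcontF.mono ?_
    intro x hx; simp only [mem_Icc] at hx ⊢; exact ⟨by linarith [hx.1], hx.2⟩
  have I3 : IntervalIntegrable (fun σ => K (t - σ) (g σ)) volume t₀ t := by
    apply ContinuousOn.intervalIntegrable
    rwa [Set.uIcc_of_le ht'.1]
  -- change of variables in the convolution term
  have e1 : convMap K t₀ f b u (t + h) = ∫ σ in (t₀ - h)..t, K (t - σ) (g (σ + h)) := by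
    have h2 : (∫ x in (t₀ - h)..t, (fun s => K (t + h - s) (g s)) (x + h))
        = ∫ x in (t₀ - h) + h..t + h, K (t + h - x) (g x) :=
      intervalIntegral.integral_comp_add_right (fun s => K (t + h - s) (g s)) h
    rw [sub_add_cancel] at h2
    have h3 : (∫ x in (t₀ - h)..t, K (t - x) (g (x + h)))
        = ∫ x in (t₀ - h)..t, (fun s => K (t + h - s) (g s)) (x + h) := by
      refine intervalIntegral.integral_congr fun x _ => ?_
      simp only
      rw [show t + h - (x + h) = t - x by ring]
    simp only [convMap, hg']
    rw [← h2, ← h3]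
  have e0 : convMap K t₀ f b u t = ∫ σ in t₀..t, K (t - σ) (g σ) := by
    simp only [convMap, hg']
  have hsplit : convMap K t₀ f b u (t + h) - convMap K t₀ f b u t
      = (∫ σ in (t₀ - h)..t₀, K (t - σ) (g (σ + h)))
        + ∫ σ in t₀..t, (K (t - σ) (g (σ + h)) - K (t - σ) (g σ)) := by
    rw [e1, e0, ← intervalIntegral.integral_add_adjacent_intervals I1 I2,
      intervalIntegral.integral_sub I2 I3]
    abel
  have hP2a : ‖∫ σ in (t₀ - h)..t₀, K (t - σ) (g (σ + h))‖ ≤ M * N * h := by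
    have hb := intervalIntegral.norm_integral_le_of_norm_le_const
      (C := M * N) (a := t₀ - h) (b := t₀)
      (f := fun σ => K (t - σ) (g (σ + h))) ?_
    · rwa [show |t₀ - (t₀ - h)| = h by rw [show t₀ - (t₀ - h) = h by ring, abs_of_pos hh]] at hb
    · intro x hx
      rw [Set.uIoc_of_le (by linarith : t₀ - h ≤ t₀)] at hx
      have hmem : t - x ∈ Icc (0:ℝ) a :=
        ⟨by linarith [hx.2, ht'.1], by linarith [hx.1, hth'.2]⟩
      calc ‖(K (t - x)) (g (x + h))‖ ≤ ‖K (t - x)‖ * ‖g (x + h)‖ := (K (t - x)).le_opNorm _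
        _ ≤ M * N := mul_le_mul (hKbd _ hmem)
            (hgbd (x + h) ⟨by linarith [hx.1], by linarith [hx.2, ht'.2, hha]⟩)
            (norm_nonneg _) hM0
  have hInt : IntervalIntegrable (fun σ => ‖u (σ + h) - u σ‖) volume t₀ t := by
    apply ContinuousOn.intervalIntegrable
    rw [Set.uIcc_of_le ht'.1]
    apply ContinuousOn.norm
    apply ContinuousOn.sub
    · refine hucont.comp (continuous_add_right h).continuousOn ?_
      intro x hx
      simp only [mem_Icc] at hx
      simp only [hJ, mem_Icc]
      constructor <;> linarith [hx.1, hx.2, hth'.2]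
    · refine hucont.mono ?_
      intro x hx
      simp only [mem_Icc] at hx
      simp only [hJ, mem_Icc]
      exact ⟨hx.1, by linarith [hx.2, ht'.2]⟩
  have hP2b : ‖∫ σ in t₀..t, (K (t - σ) (g (σ + h)) - K (t - σ) (g σ))‖ ≤
      M * C * h * (t - t₀) +
        M * C * (1 + (r : ℝ) * kc) * ∫ s in t₀..t, ‖u (s + h) - u s‖ := by
    calc ‖∫ σ in t₀..t, (K (t - σ) (g (σ + h)) - K (t - σ) (g σ))‖
        ≤ ∫ σ in t₀..t, ‖K (t - σ) (g (σ + h)) - K (t - σ) (g σ)‖ :=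
          intervalIntegral.norm_integral_le_integral_norm ht'.1
      _ ≤ ∫ σ in t₀..t, (M * C * h + M * C * (1 + (r : ℝ) * kc) * ‖u (σ + h) - u σ‖) := by
          refine intervalIntegral.integral_mono_on ht'.1 (I2.sub I3).norm
            (intervalIntegrable_const.add (hInt.const_mul _)) ?_
          intro σ hσ
          simp only [mem_Icc] at hσ
          have hσJ : σ ∈ J := by
            simp only [hJ, mem_Icc]; exact ⟨hσ.1, by linarith [hσ.2, ht'.2]⟩
          have hσhJ : σ + h ∈ J := by
            simp only [hJ, mem_Icc]
            constructor <;> linarith [hσ.1, hσ.2, hth'.2]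
          have hmem : t - σ ∈ Icc (0:ℝ) a := ⟨by linarith [hσ.2], by linarith [hσ.1, ht'.2]⟩
          have hKn : ‖K (t - σ) (g (σ + h)) - K (t - σ) (g σ)‖ ≤ M * ‖g (σ + h) - g σ‖ := by
            rw [← map_sub]
            exact le_trans ((K (t - σ)).le_opNorm _)
              (mul_le_mul_of_nonneg_right (hKbd _ hmem) (norm_nonneg _))
          have hsum : ∑ i, ‖fArgs b u (σ + h) i - fArgs b u σ i‖ ≤
              (1 + (r : ℝ) * kc) * ‖u (σ + h) - u σ‖ := by
            rw [Fin.sum_univ_succ]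
            simp only [fArgs, Fin.cons_zero, Fin.cons_succ]
            have hsum2 : ∑ j : Fin r, ‖u (b j (σ + h)) - u (b j σ)‖ ≤
                (r : ℝ) * (kc * ‖u (σ + h) - u σ‖) := by
              refine le_trans (Finset.sum_le_sum fun j _ => hub j (σ + h) hσhJ σ hσJ) ?_
              rw [Finset.sum_const, Finset.card_univ, Fintype.card_fin, nsmul_eq_mul]
            nlinarith [hsum2]
          have hglip : ‖g (σ + h) - g σ‖ ≤
              C * (h + (1 + (r : ℝ) * kc) * ‖u (σ + h) - u σ‖) := by
            rw [hg]
            refine le_trans (hfLip (σ + h) hσhJ σ hσJ _ _) ?_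
            rw [show σ + h - σ = h by ring, abs_of_pos hh]
            exact mul_le_mul_of_nonneg_left (by linarith [hsum]) hC0
          calc ‖K (t - σ) (g (σ + h)) - K (t - σ) (g σ)‖
              ≤ M * (C * (h + (1 + (r : ℝ) * kc) * ‖u (σ + h) - u σ‖)) :=
                le_trans hKn (mul_le_mul_of_nonneg_left hglip hM0)
            _ = M * C * h + M * C * (1 + (r : ℝ) * kc) * ‖u (σ + h) - u σ‖ := by ring
      _ = M * C * h * (t - t₀) +
            M * C * (1 + (r : ℝ) * kc) * ∫ s in t₀..t, ‖u (s + h) - u s‖ := by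
          rw [intervalIntegral.integral_add intervalIntegrable_const (hInt.const_mul _),
            intervalIntegral.integral_const_mul (M * C * (1 + (r : ℝ) * kc)),
            intervalIntegral.integral_const, smul_eq_mul]
          ring
  have hP2 : ‖convMap K t₀ f b u (t + h) - convMap K t₀ f b u t‖ ≤
      M * N * h + (M * C * h * (t - t₀) +
        M * C * (1 + (r : ℝ) * kc) * ∫ s in t₀..t, ‖u (s + h) - u s‖) := by
    rw [hsplit]
    exact le_trans (norm_add_le _ _) (add_le_add hP2a hP2b)
  have hnorm : ‖u (t + h) - u t‖ ≤
      ℓ * h * ‖B u₀‖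
      + (M * N * h + (M * C * h * (t - t₀) +
          M * C * (1 + (r : ℝ) * kc) * ∫ s in t₀..t, ‖u (s + h) - u s‖))
      + ℓ * h * (‖B‖ * ((∑ k, |Ck k|) *
          ((a ^ (1 - γ) / Real.Gamma (2 - γ)) * (M * N * a)))) := by
    rw [key]
    refine le_trans (le_trans (norm_sub_le _ _) (add_le_add_left (norm_add_le _ _) _)) ?_
    exact add_le_add (add_le_add hP1 hP2) hP3
  have hlast : M * C * h * (t - t₀) ≤ M * C * h * a :=
    mul_le_mul_of_nonneg_left (by linarith [ht'.2]) (by positivity)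
  rw [hδ']
  linarith [hnorm, hlast]
end
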